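/- arXiv:math/0601624 — 4 statements merged into one kernel-verified Lean document; each statement's English description precedes it below -/
import Mathlib

section
/- The number of Bernoulli paths of length n (paths starting at 0 with steps ±1) having exactly k peaks equals binomial(n+1, n-2k). -/
/-- The value at time `i` of the Bernoulli path with `n` steps encoded by
`f : Fin n → Bool` (`true` = step `+1`, `false` = step `-1`), started at `0`. -/
def pathVal {n : ℕ} (f : Fin n → Bool) (i : ℕ) : ℤ :=
  ∑ j ∈ Finset.range i, (if h : j < n then (if f ⟨j, h⟩ then (1 : ℤ) else -1) else 0)

/-- `x` is a peak: `1 ≤ x ≤ n-1` and `S(x-1) = S(x+1) = S(x) - 1`. -/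
def IsPeak {n : ℕ} (f : Fin n → Bool) (x : ℕ) : Prop :=
  0 < x ∧ x < n ∧ pathVal f x = pathVal f (x - 1) + 1 ∧
    pathVal f (x + 1) = pathVal f x - 1

instance {n : ℕ} (f : Fin n → Bool) (x : ℕ) : Decidable (IsPeak f x) := by
  unfold IsPeak; infer_instance

/-- Number of peaks of the path encoded by `f`. -/
def numPeaks {n : ℕ} (f : Fin n → Bool) : ℕ :=
  ((Finset.range n).filter (fun x => IsPeak f x)).card

open Finset

/-- Bit at position `j`, `false` out of range. -/
def fbit {n : ℕ} (f : Fin n → Bool) (j : ℕ) : Bool :=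
  if h : j < n then f ⟨j, h⟩ else false

lemma fbit_pos {n : ℕ} (f : Fin n → Bool) {j : ℕ} (h : j < n) :
    fbit f j = f ⟨j, h⟩ := dif_pos h

lemma pathVal_succ {n : ℕ} (f : Fin n → Bool) (i : ℕ) :
    pathVal f (i + 1) = pathVal f i +
      (if h : i < n then (if f ⟨i, h⟩ then (1 : ℤ) else -1) else 0) :=
  Finset.sum_range_succ _ i

lemma isPeak_iff {n : ℕ} (f : Fin n → Bool) (x : ℕ) :
    IsPeak f x ↔ 0 < x ∧ x < n ∧ fbit f (x - 1) = true ∧ fbit f x = false := by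
  constructor
  · rintro ⟨hx, hn, h1, h2⟩
    have hx1 : x - 1 < n := by omega
    refine ⟨hx, hn, ?_, ?_⟩
    · have key := pathVal_succ f (x - 1)
      rw [dif_pos hx1, show x - 1 + 1 = x by omega] at key
      rw [key] at h1
      have h3 := add_left_cancel h1
      rw [fbit_pos f hx1]
      cases hf : f ⟨x - 1, hx1⟩
      · rw [hf] at h3; norm_num at h3
      · rfl
    · have key := pathVal_succ f x
      rw [dif_pos hn] at key
      rw [key, sub_eq_add_neg] at h2
      have h3 := add_left_cancel h2
      rw [fbit_pos f hn]
      cases hf : f ⟨x, hn⟩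
      · rfl
      · rw [hf] at h3; norm_num at h3
  · rintro ⟨hx, hn, h1, h2⟩
    have hx1 : x - 1 < n := by omega
    rw [fbit_pos f hx1] at h1
    rw [fbit_pos f hn] at h2
    refine ⟨hx, hn, ?_, ?_⟩
    · have key := pathVal_succ f (x - 1)
      rw [dif_pos hx1, show x - 1 + 1 = x by omega, h1] at key
      simpa using key
    · have key := pathVal_succ f x
      rw [dif_pos hn, h2] at key
      rw [key, if_neg (by decide : ¬ (false = true))]; ring

/-- Number of descents (occurrences of the pattern `10`). -/
def dcount {n : ℕ} (f : Fin n → Bool) : ℕ :=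
  ∑ x ∈ Finset.range (n - 1), if fbit f x = true ∧ fbit f (x + 1) = false then 1 else 0

lemma numPeaks_eq_dcount {n : ℕ} (f : Fin n → Bool) : numPeaks f = dcount f := by
  unfold numPeaks dcount
  rw [Finset.card_filter]
  rcases n with _ | m
  · simp
  · rw [Finset.sum_range_succ']
    have h0 : (if IsPeak f 0 then 1 else 0) = 0 := by
      rw [if_neg]; rintro ⟨h, -⟩; omega
    rw [h0, add_zero]
    simp only [Nat.add_sub_cancel]
    refine Finset.sum_congr rfl fun x hx => ?_
    rw [Finset.mem_range] at hx
    have hc : IsPeak f (x + 1) ↔ (fbit f x = true ∧ fbit f (x + 1) = false) := by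
      rw [isPeak_iff]
      constructor
      · rintro ⟨-, -, h1, h2⟩
        exact ⟨by simpa using h1, h2⟩
      · rintro ⟨h1, h2⟩
        exact ⟨by omega, by omega, by simpa using h1, h2⟩
    rw [if_congr hc rfl rfl]

lemma fbit_snoc {n : ℕ} (f : Fin n → Bool) (b : Bool) (j : ℕ) :
    fbit (Fin.snoc f b : Fin (n + 1) → Bool) j =
      if j < n then fbit f j else if j = n then b else false := by
  by_cases h : j < n
  · rw [if_pos h, fbit_pos _ (show j < n + 1 by omega), fbit_pos f h]
    have : (⟨j, by omega⟩ : Fin (n + 1)) = Fin.castSucc ⟨j, h⟩ := rfl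
    rw [this, Fin.snoc_castSucc]
  · rw [if_neg h]
    by_cases hj : j = n
    · subst hj
      rw [if_pos rfl, fbit_pos _ (show j < j + 1 by omega)]
      exact Fin.snoc_last _ _
    · rw [if_neg hj]
      unfold fbit
      rw [dif_neg (by omega)]

lemma dcount_snoc {n : ℕ} (f : Fin n → Bool) (b : Bool) :
    dcount (Fin.snoc f b : Fin (n + 1) → Bool) =
      dcount f + if 0 < n ∧ fbit f (n - 1) = true ∧ b = false then 1 else 0 := by
  unfold dcount
  simp only [Nat.add_sub_cancel]
  rcases n with _ | m
  · simp
  · rw [Finset.sum_range_succ]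
    congr 1
    · refine Finset.sum_congr rfl fun x hx => ?_
      rw [Finset.mem_range] at hx
      rw [fbit_snoc, fbit_snoc, if_pos (show x < m + 1 by omega),
        if_pos (show x + 1 < m + 1 by omega)]
    · rw [fbit_snoc, fbit_snoc, if_pos (show m < m + 1 by omega),
        if_neg (show ¬ m + 1 < m + 1 by omega), if_pos rfl]
      simp only [Nat.add_sub_cancel]
      refine if_congr ?_ rfl rfl
      constructor
      · rintro ⟨h1, h2⟩; exact ⟨by omega, h1, h2⟩
      · rintro ⟨-, h1, h2⟩; exact ⟨h1, h2⟩

lemma snoc_injective {n : ℕ} (b : Bool) :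
    Function.Injective (fun g : Fin n → Bool => (Fin.snoc g b : Fin (n + 1) → Bool)) := by
  intro g1 g2 h
  funext i
  have := congrFun h (Fin.castSucc i)
  simpa [Fin.snoc_castSucc] using this

lemma card_filter_snoc {n : ℕ} (P : (Fin (n + 1) → Bool) → Prop) [DecidablePred P] :
    ((univ : Finset (Fin (n + 1) → Bool)).filter P).card =
      ((univ : Finset (Fin n → Bool)).filter fun g =>
        P (Fin.snoc g true : Fin (n + 1) → Bool)).card +
      ((univ : Finset (Fin n → Bool)).filter fun g =>
        P (Fin.snoc g false : Fin (n + 1) → Bool)).card := by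
  classical
  have himg : (univ : Finset (Fin (n + 1) → Bool)).filter P =
      (((univ : Finset (Fin n → Bool)).filter fun g =>
          P (Fin.snoc g true : Fin (n + 1) → Bool)).image
        fun g => (Fin.snoc g true : Fin (n + 1) → Bool)) ∪
      (((univ : Finset (Fin n → Bool)).filter fun g =>
          P (Fin.snoc g false : Fin (n + 1) → Bool)).image
        fun g => (Fin.snoc g false : Fin (n + 1) → Bool)) := by
    ext f
    simp only [Finset.mem_union, Finset.mem_image, Finset.mem_filter, Finset.mem_univ, true_and]
    constructor
    · intro hf
      have hself := Fin.snoc_init_self f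
      cases hb : f (Fin.last n)
      · rw [hb] at hself
        exact Or.inr ⟨Fin.init f, by rw [hself]; exact hf, hself⟩
      · rw [hb] at hself
        exact Or.inl ⟨Fin.init f, by rw [hself]; exact hf, hself⟩
    · rintro (⟨g, hg, rfl⟩ | ⟨g, hg, rfl⟩) <;> exact hg
  have hdisj : Disjoint
      (((univ : Finset (Fin n → Bool)).filter fun g =>
          P (Fin.snoc g true : Fin (n + 1) → Bool)).image
        fun g => (Fin.snoc g true : Fin (n + 1) → Bool))
      (((univ : Finset (Fin n → Bool)).filter fun g =>
          P (Fin.snoc g false : Fin (n + 1) → Bool)).image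
        fun g => (Fin.snoc g false : Fin (n + 1) → Bool)) := by
    rw [Finset.disjoint_left]
    rintro f hf1 hf2
    simp only [Finset.mem_image, Finset.mem_filter, Finset.mem_univ, true_and] at hf1 hf2
    obtain ⟨g1, -, rfl⟩ := hf1
    obtain ⟨g2, -, h2⟩ := hf2
    have := congrArg (fun f => f (Fin.last n)) h2
    simp only [Fin.snoc_last] at this
    simp at this
  rw [himg, Finset.card_union_of_disjoint hdisj,
    Finset.card_image_of_injective _ (snoc_injective true),
    Finset.card_image_of_injective _ (snoc_injective false)]

def cnt (n k : ℕ) : ℕ :=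
  ((univ : Finset (Fin n → Bool)).filter fun f => dcount f = k).card

def cntL (n k : ℕ) (b : Bool) : ℕ :=
  ((univ : Finset (Fin n → Bool)).filter fun f => dcount f = k ∧ fbit f (n - 1) = b).card

lemma cnt_split (n k : ℕ) : cnt n k = cntL n k true + cntL n k false := by
  classical
  unfold cnt cntL
  have h := Finset.card_filter_add_card_filter_not
    (s := (univ : Finset (Fin n → Bool)).filter fun f => dcount f = k)
    (p := fun f => fbit f (n - 1) = true)
  rw [Finset.filter_filter, Finset.filter_filter] at h
  rw [← h]
  congr 1
  refine congrArg Finset.card (Finset.filter_congr fun f _ => ?_)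
  rw [Bool.not_eq_true]

lemma cntL_succ_true (n k : ℕ) : cntL (n + 1) k true = cnt n k := by
  unfold cntL cnt
  rw [card_filter_snoc]
  simp only [Nat.add_sub_cancel]
  have h1 : ((univ : Finset (Fin n → Bool)).filter fun g =>
      dcount (Fin.snoc g true : Fin (n + 1) → Bool) = k ∧
        fbit (Fin.snoc g true : Fin (n + 1) → Bool) n = true)
      = (univ.filter fun g => dcount g = k) := by
    refine Finset.filter_congr fun g _ => ?_
    rw [dcount_snoc, fbit_snoc, if_neg (lt_irrefl n), if_pos rfl]
    simp
  have h2 : ((univ : Finset (Fin n → Bool)).filter fun g =>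
      dcount (Fin.snoc g false : Fin (n + 1) → Bool) = k ∧
        fbit (Fin.snoc g false : Fin (n + 1) → Bool) n = true)
      = ∅ := by
    refine Finset.filter_false_of_mem fun g _ => ?_
    rw [fbit_snoc, if_neg (lt_irrefl n), if_pos rfl]
    rintro ⟨-, h⟩
    exact Bool.false_ne_true h
  rw [h1, h2]
  simp

lemma cntL_succ_false_aux (n k : ℕ) (hn : 0 < n) :
    cntL (n + 1) k false = ((univ : Finset (Fin n → Bool)).filter fun g =>
      dcount g + (if fbit g (n - 1) = true then 1 else 0) = k).card := by
  unfold cntL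
  rw [card_filter_snoc]
  simp only [Nat.add_sub_cancel]
  have h1 : ((univ : Finset (Fin n → Bool)).filter fun g =>
      dcount (Fin.snoc g true : Fin (n + 1) → Bool) = k ∧
        fbit (Fin.snoc g true : Fin (n + 1) → Bool) n = false)
      = ∅ := by
    refine Finset.filter_false_of_mem fun g _ => ?_
    rw [fbit_snoc, if_neg (lt_irrefl n), if_pos rfl]
    rintro ⟨-, h⟩
    simp at h
  have h2 : ((univ : Finset (Fin n → Bool)).filter fun g =>
      dcount (Fin.snoc g false : Fin (n + 1) → Bool) = k ∧
        fbit (Fin.snoc g false : Fin (n + 1) → Bool) n = false)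
      = ((univ : Finset (Fin n → Bool)).filter fun g =>
        dcount g + (if fbit g (n - 1) = true then 1 else 0) = k) := by
    refine Finset.filter_congr fun g _ => ?_
    rw [dcount_snoc, fbit_snoc, if_neg (lt_irrefl n), if_pos rfl]
    have : (0 < n ∧ fbit g (n - 1) = true ∧ false = false) ↔ (fbit g (n - 1) = true) := by
      constructor
      · rintro ⟨-, h, -⟩; exact h
      · intro h; exact ⟨hn, h, rfl⟩
    rw [if_congr this rfl rfl]
    simp
  rw [h1, h2]
  simp

lemma dcount_one (f : Fin 1 → Bool) : dcount f = 0 := by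
  unfold dcount; simp

lemma cntL_one (k : ℕ) (b : Bool) : cntL 1 k b = if k = 0 then 1 else 0 := by
  unfold cntL
  rcases k with _ | k
  · rw [if_pos rfl]
    rw [Finset.card_eq_one]
    refine ⟨fun _ => b, ?_⟩
    ext f
    simp only [Finset.mem_filter, Finset.mem_univ, true_and, Finset.mem_singleton]
    constructor
    · rintro ⟨-, h⟩
      funext i
      have : i = (⟨0, by omega⟩ : Fin 1) := by
        ext; omega
      rw [this]
      rw [fbit_pos f (show 0 < 1 by omega)] at h
      exact h
    · rintro rfl
      exact ⟨dcount_one _, by rw [fbit_pos _ (show 0 < 1 by omega)]⟩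
  · rw [if_neg (by omega)]
    rw [Finset.card_eq_zero]
    refine Finset.filter_false_of_mem fun f _ => ?_
    rintro ⟨h, -⟩
    rw [dcount_one] at h
    omega

lemma cntL_eq : ∀ n : ℕ, 0 < n → ∀ k : ℕ,
    cntL n k true = n.choose (2 * k + 1) ∧ cntL n k false = n.choose (2 * k) := by
  intro n
  induction n with
  | zero => intro h; exact absurd h (by omega)
  | succ m ih =>
    intro _ k
    rcases Nat.eq_zero_or_pos m with rfl | hm
    · constructor
      · rw [cntL_one]
        rcases k with _ | k
        · simp
        · rw [if_neg (by omega), Nat.choose_eq_zero_of_lt (by omega)]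
      · rw [cntL_one]
        rcases k with _ | k
        · simp
        · rw [if_neg (by omega), Nat.choose_eq_zero_of_lt (by omega)]
    · have iht := fun k => (ih hm k).1
      have ihf := fun k => (ih hm k).2
      constructor
      · rw [cntL_succ_true, cnt_split, iht k, ihf k, Nat.choose_succ_succ]
        simp only [Nat.succ_eq_add_one]
        omega
      · rcases k with _ | k
        · -- k = 0
          rw [cntL_succ_false_aux m 0 hm]
          have hset : ((univ : Finset (Fin m → Bool)).filter fun g =>
              dcount g + (if fbit g (m - 1) = true then 1 else 0) = 0)
              = ((univ : Finset (Fin m → Bool)).filter fun g =>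
                dcount g = 0 ∧ fbit g (m - 1) = false) := by
            refine Finset.filter_congr fun g _ => ?_
            by_cases h : fbit g (m - 1) = true
            · rw [if_pos h]
              constructor
              · intro hh; omega
              · rintro ⟨-, hh⟩; rw [h] at hh; simp at hh
            · rw [if_neg h]
              simp only [add_zero, Bool.not_eq_true] at h ⊢
              constructor
              · intro hh; exact ⟨hh, h⟩
              · rintro ⟨hh, -⟩; exact hh
          rw [hset]
          have := ihf 0
          unfold cntL at this
          rw [this]
          simp
        · -- k + 1
          rw [cntL_succ_false_aux m (k + 1) hm]
          have h := Finset.card_filter_add_card_filter_not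
            (s := (univ : Finset (Fin m → Bool)).filter fun g =>
              dcount g + (if fbit g (m - 1) = true then 1 else 0) = k + 1)
            (p := fun g => fbit g (m - 1) = true)
          rw [Finset.filter_filter, Finset.filter_filter] at h
          rw [← h]
          have e1 : ((univ : Finset (Fin m → Bool)).filter fun g =>
              (dcount g + (if fbit g (m - 1) = true then 1 else 0) = k + 1) ∧
                fbit g (m - 1) = true)
              = ((univ : Finset (Fin m → Bool)).filter fun g =>
                dcount g = k ∧ fbit g (m - 1) = true) := by
            refine Finset.filter_congr fun g _ => ?_
            constructor
            · rintro ⟨h1, h2⟩; rw [if_pos h2] at h1; exact ⟨by omega, h2⟩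
            · rintro ⟨h1, h2⟩; rw [if_pos h2]; exact ⟨by omega, h2⟩
          have e2 : ((univ : Finset (Fin m → Bool)).filter fun g =>
              (dcount g + (if fbit g (m - 1) = true then 1 else 0) = k + 1) ∧
                ¬ fbit g (m - 1) = true)
              = ((univ : Finset (Fin m → Bool)).filter fun g =>
                dcount g = k + 1 ∧ fbit g (m - 1) = false) := by
            refine Finset.filter_congr fun g _ => ?_
            simp only [Bool.not_eq_true]
            constructor
            · rintro ⟨h1, h2⟩; rw [h2] at h1; simp at h1; exact ⟨by omega, h2⟩
            · rintro ⟨h1, h2⟩; rw [h2]; simpa using h1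
          rw [e1, e2]
          have t1 := iht k
          have t2 := ihf (k + 1)
          unfold cntL at t1 t2
          rw [t1, t2]
          have : 2 * (k + 1) = (2 * k + 1) + 1 := by ring
          rw [this, Nat.choose_succ_succ]


/-- The number of Bernoulli paths of length `n` with exactly `k` peaks is
`binomial(n+1, n-2k)` (which is `0` when `n - 2k < 0`). -/
theorem card_paths_with_k_peaks (n k : ℕ) :
    ((Finset.univ : Finset (Fin n → Bool)).filter (fun f => numPeaks f = k)).card
      = if 2 * k ≤ n then (n + 1).choose (n - 2 * k) else 0 := by
  have hre : ((Finset.univ : Finset (Fin n → Bool)).filter (fun f => numPeaks f = k)).card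
      = cnt n k := by
    unfold cnt
    exact congrArg Finset.card
      (Finset.filter_congr fun f _ => by rw [numPeaks_eq_dcount])
  rw [hre]
  rcases n with _ | m
  · -- n = 0
    unfold cnt
    rcases k with _ | k
    · rw [if_pos (by omega)]
      norm_num
      rw [Finset.filter_true_of_mem fun f _ => by unfold dcount; simp]
      simp
    · rw [if_neg (by omega)]
      rw [Finset.card_eq_zero]
      refine Finset.filter_false_of_mem fun f _ => ?_
      intro h
      unfold dcount at h
      simp at h
  · rw [cnt_split, (cntL_eq (m + 1) (by omega) k).1, (cntL_eq (m + 1) (by omega) k).2]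
    have hp : (m + 1).choose (2 * k + 1) + (m + 1).choose (2 * k)
        = (m + 2).choose (2 * k + 1) := by
      rw [add_comm]
      exact (Nat.choose_succ_succ (m + 1) (2 * k)).symm
    rw [hp]
    by_cases h : 2 * k ≤ m + 1
    · rw [if_pos h, ← Nat.choose_symm (show 2 * k + 1 ≤ m + 2 by omega)]
      congr 1
      omega
    · rw [if_neg h, Nat.choose_eq_zero_of_lt (by omega)]
end

section
/- The number of Bernoulli excursions of length 2n (nonnegative paths with ±1 steps starting and ending at 0) having exactly k peaks equals the Narayana number (1/n)·binomial(n,k)·binomial(n,k-1). -/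
/-- The path stays nonnegative on `[0, n]`. -/
def IsNonneg {n : ℕ} (f : Fin n → Bool) : Prop :=
  ∀ i ∈ Finset.range (n + 1), 0 ≤ pathVal f i

instance {n : ℕ} (f : Fin n → Bool) : Decidable (IsNonneg f) := by
  unfold IsNonneg; infer_instance

namespace Nara
open Finset

def ext {N : ℕ} (f : Fin N → Bool) : ℕ → Bool := fun j => if h : j < N then f ⟨j, h⟩ else false

def ups (F : ℕ → Bool) (i : ℕ) : ℕ := ((Finset.range i).filter (fun j => F j = true)).card
def dns (F : ℕ → Bool) (i : ℕ) : ℕ := ((Finset.range i).filter (fun j => F j = false)).card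

lemma ups_succ (F : ℕ → Bool) (i : ℕ) :
    ups F (i+1) = ups F i + (if F i then 1 else 0) := by
  unfold ups
  rw [Finset.range_add_one, Finset.filter_insert]
  by_cases h : F i = true
  · simp [h, Finset.card_insert_of_notMem]
  · simp [h]

lemma dns_succ (F : ℕ → Bool) (i : ℕ) :
    dns F (i+1) = dns F i + (if F i then 0 else 1) := by
  unfold dns
  rw [Finset.range_add_one, Finset.filter_insert]
  by_cases h : F i = true
  · simp [h]
  · simp [h, Finset.card_insert_of_notMem]

lemma ups_add_dns (F : ℕ → Bool) (i : ℕ) : ups F i + dns F i = i := by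
  induction i with
  | zero => simp [ups, dns]
  | succ i ih => rw [ups_succ, dns_succ]; by_cases h : F i = true <;> simp [h] <;> omega

lemma ups_mono (F : ℕ → Bool) : Monotone (ups F) := by
  intro a b hab
  exact Finset.card_le_card (Finset.filter_subset_filter _ (by simpa using hab))

lemma dns_mono (F : ℕ → Bool) : Monotone (dns F) := by
  intro a b hab
  exact Finset.card_le_card (Finset.filter_subset_filter _ (by simpa using hab))

lemma ups_succ_true {F : ℕ → Bool} {i : ℕ} (h : F i = true) : ups F (i+1) = ups F i + 1 := by
  simp [ups_succ, h]

lemma ups_succ_false {F : ℕ → Bool} {i : ℕ} (h : F i = false) : ups F (i+1) = ups F i := by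
  simp [ups_succ, h]

lemma dns_succ_true {F : ℕ → Bool} {i : ℕ} (h : F i = true) : dns F (i+1) = dns F i := by
  simp [dns_succ, h]

lemma dns_succ_false {F : ℕ → Bool} {i : ℕ} (h : F i = false) : dns F (i+1) = dns F i + 1 := by
  simp [dns_succ, h]

lemma pathVal_eq {N : ℕ} (f : Fin N → Bool) {i : ℕ} (hi : i ≤ N) :
    pathVal f i = (ups (ext f) i : ℤ) - dns (ext f) i := by
  induction i with
  | zero => simp [pathVal, ups, dns]
  | succ i ih =>
    have hi' : i ≤ N := Nat.le_of_succ_le hi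
    have hiN : i < N := hi
    have : pathVal f (i+1) = pathVal f i + (if ext f i then (1:ℤ) else -1) := by
      unfold pathVal
      rw [Finset.sum_range_succ]
      congr 1
      simp [ext, hiN]
    rw [this, ih hi']
    by_cases h : ext f i = true
    · rw [ups_succ_true h, dns_succ_true h]; simp [h]; ring
    · have h' : ext f i = false := by simpa using h
      rw [ups_succ_false h', dns_succ_false h']; simp [h']; ring

/-- the set of TF-junctions (peaks are exactly these shifted by one) -/
def Pset (F : ℕ → Bool) (N : ℕ) : Finset ℕ :=
  (Finset.range (N-1)).filter (fun i => F i = true ∧ F (i+1) = false)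

/-- the set of FT-junctions (valleys) -/
def Vset (F : ℕ → Bool) (N : ℕ) : Finset ℕ :=
  (Finset.range (N-1)).filter (fun i => F i = false ∧ F (i+1) = true)


lemma pathVal_succ {N : ℕ} (f : Fin N → Bool) {i : ℕ} (hi : i < N) :
    pathVal f (i+1) = pathVal f i + (if ext f i then (1:ℤ) else -1) := by
  unfold pathVal
  rw [Finset.sum_range_succ]
  congr 1
  simp [ext, hi]

lemma numPeaks_eq {N : ℕ} (f : Fin N → Bool) :
    numPeaks f = (Pset (ext f) N).card := by
  classical
  apply Finset.card_bij (fun x _ => x - 1)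
  · intro x hx
    simp only [Finset.mem_coe, Finset.mem_filter, Finset.mem_range] at hx
    simp only [IsPeak] at hx
    obtain ⟨hxN, hx0, hxlt, h1, h2⟩ := hx
    have hx1 : x - 1 < N := by omega
    have hstep := pathVal_succ f hx1
    rw [show x - 1 + 1 = x by omega] at hstep
    have hstep2 := pathVal_succ f hxlt
    simp only [Pset, Finset.mem_filter, Finset.mem_range]
    refine ⟨by omega, ?_, ?_⟩
    · by_contra hne
      have : ext f (x-1) = false := by simpa using hne
      rw [this] at hstep; simp at hstep; omega
    · have hx1x : x - 1 + 1 = x := by omega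
      rw [hx1x]
      by_contra hne
      have : ext f x = true := by simpa using hne
      rw [this] at hstep2; simp at hstep2; omega
  · intro a ha b hb hab
    simp only [Finset.mem_coe, Pset, Finset.mem_filter, Finset.mem_range] at ha hb
    simp only [IsPeak] at ha hb
    omega
  · intro b hb
    simp only [Pset, Finset.mem_filter, Finset.mem_range] at hb
    obtain ⟨hbN, hbt, hbf⟩ := hb
    refine ⟨b + 1, ?_, by omega⟩
    have hb1N : b + 1 < N := by omega
    have hstep := pathVal_succ f (show b < N by omega)
    have hstep2 := pathVal_succ f hb1N
    rw [hbt] at hstep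
    rw [hbf] at hstep2
    simp only [Finset.mem_coe, Finset.mem_filter, Finset.mem_range]
    simp only [IsPeak]
    refine ⟨by omega, by omega, by omega, ?_, ?_⟩
    · simpa using hstep
    · simpa [sub_eq_add_neg] using hstep2

def g (X : Finset ℕ) (c : ℕ) : ℕ := (X.filter (· ≤ c)).card

lemma g_mono (X : Finset ℕ) : Monotone (g X) := by
  intro a b hab
  apply Finset.card_le_card
  intro x hx
  simp only [Finset.mem_filter] at *
  exact ⟨hx.1, le_trans hx.2 hab⟩

lemma g_zero {m : ℕ} {X : Finset ℕ} (hX : X ⊆ Finset.Icc 1 m) : g X 0 = 0 := by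
  unfold g
  rw [Finset.card_eq_zero, Finset.filter_eq_empty_iff]
  intro x hx
  have := hX hx
  simp only [Finset.mem_Icc] at this
  omega

lemma g_succ (X : Finset ℕ) (c : ℕ) :
    g X (c+1) = g X c + (if c+1 ∈ X then 1 else 0) := by
  unfold g
  by_cases h : c + 1 ∈ X
  · rw [if_pos h]
    have : X.filter (· ≤ c + 1) = insert (c+1) (X.filter (· ≤ c)) := by
      ext x
      simp only [Finset.mem_filter, Finset.mem_insert]
      constructor
      · rintro ⟨hx, hle⟩
        rcases Nat.lt_or_ge x (c+1) with h' | h'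
        · exact Or.inr ⟨hx, by omega⟩
        · have : x = c + 1 := by omega
          exact Or.inl this
      · rintro (rfl | ⟨hx, hle⟩)
        · exact ⟨h, le_refl _⟩
        · exact ⟨hx, by omega⟩
    rw [this, Finset.card_insert_of_notMem (by simp)]
  · rw [if_neg h]
    congr 1
    apply Finset.filter_congr
    intro x hx
    constructor
    · intro hle
      rcases Nat.lt_or_ge x (c+1) with h' | h'
      · omega
      · exact absurd (by omega : x = c+1) (fun e => h (e ▸ hx))
    · intro h'; omega

lemma g_le_card (X : Finset ℕ) (c : ℕ) : g X c ≤ X.card :=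
  Finset.card_le_card (Finset.filter_subset _ _)

lemma g_eq_card {m c : ℕ} {X : Finset ℕ} (hX : X ⊆ Finset.Icc 1 m) (hc : m ≤ c) :
    g X c = X.card := by
  unfold g
  congr 1
  apply Finset.filter_true_of_mem
  intro x hx
  have := hX hx
  simp only [Finset.mem_Icc] at this
  omega

lemma g_succ_le (X : Finset ℕ) (c : ℕ) : g X (c+1) ≤ g X c + 1 := by
  rw [g_succ]; split <;> omega

/-- number of elements greater than c -/
lemma card_filter_gt (X : Finset ℕ) (c : ℕ) :
    (X.filter (fun x => c < x)).card = X.card - g X c := by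
  have h := Finset.card_filter_add_card_filter_not (s := X) (p := (· ≤ c))
  simp only [not_le] at h
  unfold g
  omega

open Classical in
noncomputable def swapAt (p : Finset ℕ × Finset ℕ) : Finset ℕ × Finset ℕ :=
  if h : ∃ j, g p.2 j < g p.1 j then
    (p.1.filter (· ≤ Nat.find h) ∪ p.2.filter (fun x => Nat.find h < x),
     p.2.filter (· ≤ Nat.find h) ∪ p.1.filter (fun x => Nat.find h < x))
  else p

lemma g_union_disj (A B : Finset ℕ) (hd : Disjoint A B) (c : ℕ) :
    g (A ∪ B) c = g A c + g B c := by
  unfold g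
  rw [Finset.filter_union]
  exact Finset.card_union_of_disjoint (Finset.disjoint_filter_filter hd)

lemma swap_disj (S T : Finset ℕ) (j : ℕ) :
    Disjoint (S.filter (· ≤ j)) (T.filter (fun x => j < x)) := by
  rw [Finset.disjoint_left]
  intro x hx hx'
  simp only [Finset.mem_filter] at hx hx'
  omega

lemma g_swap_le {S T : Finset ℕ} {j c : ℕ} (hc : c ≤ j) :
    g (S.filter (· ≤ j) ∪ T.filter (fun x => j < x)) c = g S c := by
  rw [g_union_disj _ _ (swap_disj S T j)]
  have h2 : g (T.filter (fun x => j < x)) c = 0 := by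
    unfold g
    rw [Finset.card_eq_zero, Finset.filter_eq_empty_iff]
    intro x hx
    simp only [Finset.mem_filter] at hx
    omega
  have h1 : g (S.filter (· ≤ j)) c = g S c := by
    unfold g
    congr 1
    rw [Finset.filter_filter]
    apply Finset.filter_congr
    intro x _
    constructor
    · intro h; exact h.2
    · intro h; exact ⟨by omega, h⟩
  omega

lemma card_swap (S T : Finset ℕ) (j : ℕ) :
    (S.filter (· ≤ j) ∪ T.filter (fun x => j < x)).card = g S j + (T.card - g T j) := by
  rw [Finset.card_union_of_disjoint (swap_disj S T j), card_filter_gt]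
  rfl

lemma swap_swap (S T : Finset ℕ) (j : ℕ) :
    (S.filter (· ≤ j) ∪ T.filter (fun x => j < x)).filter (· ≤ j) ∪
      (T.filter (· ≤ j) ∪ S.filter (fun x => j < x)).filter (fun x => j < x) = S := by
  have h1 : (S.filter (· ≤ j) ∪ T.filter (fun x => j < x)).filter (· ≤ j) = S.filter (· ≤ j) := by
    rw [Finset.filter_union, Finset.filter_filter, Finset.filter_filter]
    have : T.filter (fun a => j < a ∧ a ≤ j) = ∅ := by
      rw [Finset.filter_eq_empty_iff]; intro x _; omega
    rw [this, Finset.union_empty]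
    congr 1
    ext x; tauto
  have h2 : (T.filter (· ≤ j) ∪ S.filter (fun x => j < x)).filter (fun x => j < x)
      = S.filter (fun x => j < x) := by
    rw [Finset.filter_union, Finset.filter_filter, Finset.filter_filter]
    have : T.filter (fun a => a ≤ j ∧ j < a) = ∅ := by
      rw [Finset.filter_eq_empty_iff]; intro x _; omega
    rw [this, Finset.empty_union]
    congr 1
    ext x; tauto
  rw [h1, h2]
  rw [← Finset.filter_or]
  apply Finset.filter_true_of_mem
  intro x _
  omega

lemma firstViol {m : ℕ} {S T : Finset ℕ} (hS : S ⊆ Finset.Icc 1 m)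
    (h : ∃ j, g T j < g S j) :
    g S (Nat.find h) = g T (Nat.find h) + 1 := by
  have hv := Nat.find_spec h
  have h0 : Nat.find h ≠ 0 := by
    intro h0
    rw [h0, g_zero hS] at hv
    omega
  obtain ⟨j', hj'⟩ := Nat.exists_eq_succ_of_ne_zero h0
  have hnv : ¬ g T j' < g S j' := Nat.find_min h (by omega)
  have h1 : g S (j' + 1) ≤ g S j' + 1 := g_succ_le S j'
  have h2 : g T j' ≤ g T (j' + 1) := g_mono T (by omega)
  rw [hj'] at hv ⊢
  have e : j'.succ = j' + 1 := rfl
  rw [e] at hv ⊢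
  omega

lemma swapAt_eq {S T : Finset ℕ} (h : ∃ j, g T j < g S j) :
    swapAt (S, T) = (S.filter (· ≤ Nat.find h) ∪ T.filter (fun x => Nat.find h < x),
                  T.filter (· ≤ Nat.find h) ∪ S.filter (fun x => Nat.find h < x)) := by
  simp only [swapAt]
  rw [dif_pos h]

lemma swapAt_find {S T : Finset ℕ} (h : ∃ j, g T j < g S j) :
    ∃ h' : (∃ j, g (swapAt (S,T)).2 j < g (swapAt (S,T)).1 j), Nat.find h' = Nat.find h := by
  rw [swapAt_eq h]
  set j₀ := Nat.find h with hj₀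
  have hviol : g (T.filter (· ≤ j₀) ∪ S.filter (fun x => j₀ < x)) j₀
      < g (S.filter (· ≤ j₀) ∪ T.filter (fun x => j₀ < x)) j₀ := by
    rw [g_swap_le (le_refl j₀), g_swap_le (le_refl j₀)]
    exact Nat.find_spec h
  refine ⟨⟨j₀, hviol⟩, ?_⟩
  apply le_antisymm
  · exact Nat.find_min' _ hviol
  · rw [Nat.le_find_iff]
    intro j hj
    rw [g_swap_le (le_of_lt hj), g_swap_le (le_of_lt hj)]
    exact Nat.find_min h hj

lemma swapAt_swapAt {S T : Finset ℕ} (h : ∃ j, g T j < g S j) :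
    swapAt (swapAt (S, T)) = (S, T) := by
  obtain ⟨h', hfind⟩ := swapAt_find h
  have e1 := swapAt_eq h
  have h'' : ∃ j, g ((swapAt (S,T)).1, (swapAt (S,T)).2).2 j < g ((swapAt (S,T)).1, (swapAt (S,T)).2).1 j := h'
  have e2 := swapAt_eq h''
  dsimp only at e2
  have hfind2 : Nat.find h'' = Nat.find h := hfind
  rw [e2, hfind2, e1]
  dsimp only
  rw [Prod.mk.injEq]
  exact ⟨swap_swap S T _, swap_swap T S _⟩

/-- bounded dominance (decidable form) -/
def DomB (m : ℕ) (S T : Finset ℕ) : Prop := ∀ j ∈ Finset.range (m+1), g S j ≤ g T j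

instance (m : ℕ) (S T : Finset ℕ) : Decidable (DomB m S T) := by unfold DomB; infer_instance

lemma domB_iff {m : ℕ} {S T : Finset ℕ} (hS : S ⊆ Finset.Icc 1 m) (hT : T ⊆ Finset.Icc 1 m)
    (hcard : S.card ≤ T.card) : DomB m S T ↔ ∀ j, g S j ≤ g T j := by
  constructor
  · intro hd j
    rcases le_or_gt j m with hj | hj
    · exact hd j (Finset.mem_range.mpr (by omega))
    · rw [g_eq_card hS (by omega), g_eq_card hT (by omega)]
      exact hcard
  · intro hd j _
    exact hd j

lemma reflect (m r : ℕ) :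
    (((Finset.powersetCard (r+1) (Finset.Icc 1 m)) ×ˢ (Finset.powersetCard (r+1) (Finset.Icc 1 m))).filter
        (fun p => ¬ DomB m p.1 p.2)).card
    = ((Finset.powersetCard (r+2) (Finset.Icc 1 m)) ×ˢ (Finset.powersetCard r (Finset.Icc 1 m))).card := by
  classical
  apply Finset.card_nbij' swapAt swapAt
  · rintro ⟨S, T⟩ hp
    simp only [Finset.mem_coe, Finset.mem_filter, Finset.mem_product, Finset.mem_powersetCard] at hp
    simp only [DomB] at hp
    obtain ⟨⟨⟨hS, hSc⟩, hT, hTc⟩, hbad⟩ := hp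
    push_neg at hbad
    obtain ⟨j, _, hj⟩ := hbad
    have h : ∃ j, g T j < g S j := ⟨j, hj⟩
    have hfv := firstViol hS h
    rw [swapAt_eq h]
    simp only [Finset.mem_coe, Finset.mem_product, Finset.mem_powersetCard]
    have hgS := g_le_card S (Nat.find h)
    have hgT := g_le_card T (Nat.find h)
    refine ⟨⟨?_, ?_⟩, ?_, ?_⟩
    · exact Finset.union_subset ((Finset.filter_subset _ _).trans hS) ((Finset.filter_subset _ _).trans hT)
    · rw [card_swap]; omega
    · exact Finset.union_subset ((Finset.filter_subset _ _).trans hT) ((Finset.filter_subset _ _).trans hS)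
    · rw [card_swap]; omega
  · rintro ⟨S, T⟩ hp
    simp only [Finset.mem_coe, Finset.mem_product, Finset.mem_powersetCard] at hp
    obtain ⟨⟨hS, hSc⟩, hT, hTc⟩ := hp
    have h : ∃ j, g T j < g S j := by
      refine ⟨m, ?_⟩
      rw [g_eq_card hS (le_refl m), g_eq_card hT (le_refl m), hSc, hTc]
      omega
    have hfv := firstViol hS h
    have hfm : Nat.find h ≤ m := by
      apply Nat.find_min'
      rw [g_eq_card hS (le_refl m), g_eq_card hT (le_refl m), hSc, hTc]
      omega
    rw [swapAt_eq h]
    simp only [Finset.mem_coe, Finset.mem_filter, Finset.mem_product, Finset.mem_powersetCard]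
    simp only [DomB]
    have hgS := g_le_card S (Nat.find h)
    have hgT := g_le_card T (Nat.find h)
    refine ⟨⟨⟨?_, ?_⟩, ?_, ?_⟩, ?_⟩
    · exact Finset.union_subset ((Finset.filter_subset _ _).trans hS) ((Finset.filter_subset _ _).trans hT)
    · rw [card_swap]; omega
    · exact Finset.union_subset ((Finset.filter_subset _ _).trans hT) ((Finset.filter_subset _ _).trans hS)
    · rw [card_swap]; omega
    · push_neg
      refine ⟨Nat.find h, Finset.mem_range.mpr (by omega), ?_⟩
      rw [g_swap_le (le_refl _), g_swap_le (le_refl _)]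
      exact Nat.find_spec h
  · rintro ⟨S, T⟩ hp
    simp only [Finset.mem_coe, Finset.mem_filter, Finset.mem_product, Finset.mem_powersetCard] at hp
    simp only [DomB] at hp
    push_neg at hp
    obtain ⟨_, j, _, hj⟩ := hp
    exact swapAt_swapAt ⟨j, hj⟩
  · rintro ⟨S, T⟩ hp
    simp only [Finset.mem_coe, Finset.mem_product, Finset.mem_powersetCard] at hp
    obtain ⟨⟨hS, hSc⟩, hT, hTc⟩ := hp
    apply swapAt_swapAt
    refine ⟨m, ?_⟩
    rw [g_eq_card hS (le_refl m), g_eq_card hT (le_refl m), hSc, hTc]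
    omega

def GoodSet (m r : ℕ) : Finset (Finset ℕ × Finset ℕ) :=
  ((Finset.powersetCard r (Finset.Icc 1 m)) ×ˢ (Finset.powersetCard r (Finset.Icc 1 m))).filter
    (fun p => DomB m p.1 p.2)

lemma goodSet_card (m r : ℕ) :
    (GoodSet m (r+1)).card + (m.choose (r+2)) * (m.choose r) = (m.choose (r+1)) * (m.choose (r+1)) := by
  classical
  have htot := Finset.card_filter_add_card_filter_not
    (s := (Finset.powersetCard (r+1) (Finset.Icc 1 m)) ×ˢ (Finset.powersetCard (r+1) (Finset.Icc 1 m)))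
    (p := fun p => DomB m p.1 p.2)
  rw [reflect m r] at htot
  unfold GoodSet
  simp only [Finset.card_product, Finset.card_powersetCard, Nat.card_Icc, Nat.add_sub_cancel] at htot
  exact htot

lemma goodSet_card_zero (m : ℕ) : (GoodSet m 0).card = 1 := by
  classical
  unfold GoodSet
  rw [Finset.powersetCard_zero]
  rw [Finset.filter_true_of_mem]
  · simp
  · intro p hp
    simp only [Finset.mem_product, Finset.mem_singleton] at hp
    intro j _
    rw [hp.1, hp.2]

lemma arith (n k G : ℕ) (hn : 1 ≤ n) (hk : 2 ≤ k)
    (hG : G + (n-1).choose k * (n-1).choose (k-2) = (n-1).choose (k-1) * (n-1).choose (k-1)) :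
    n * G = n.choose k * n.choose (k-1) := by
  obtain ⟨m, rfl⟩ : ∃ m, n = m + 1 := ⟨n - 1, by omega⟩
  obtain ⟨j, rfl⟩ : ∃ j, k = j + 2 := ⟨k - 2, by omega⟩
  simp only [Nat.add_sub_cancel] at hG ⊢
  have hpas1 : (m+1).choose (j+2) = m.choose (j+1) + m.choose (j+2) := Nat.choose_succ_succ' (m+1-1) (j+1)
  have hpas2 : (m+1).choose (j+1) = m.choose j + m.choose (j+1) := Nat.choose_succ_succ' (m+1-1) j
  have e1 : j + 2 - 1 = j + 1 := rfl
  rw [e1] at hG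
  set a := m.choose (j+2) with ha
  set b := m.choose (j+1) with hb
  set c := m.choose j with hc
  rcases le_or_gt (j+2) (m+1) with hcase | hcase
  · -- k ≤ n
    have r1 : (m+1) * b = ((m+1).choose (j+2)) * (j+2) := Nat.add_one_mul_choose_eq m (j+1)
    have r2 : b * (m+1) = ((m+1).choose (j+1)) * (m+1 - (j+1)) := Nat.choose_mul_succ_eq m (j+1)
    rw [hpas1] at r1
    rw [hpas2] at r2
    have hmj : m + 1 - (j+1) = m - j := by omega
    rw [hmj] at r2
    -- work in ℤ
    have hGZ : (G : ℤ) + a * c = b * b := by exact_mod_cast hG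
    have r1Z : ((m:ℤ)+1) * b = (b + a) * (j+2) := by exact_mod_cast r1
    have r2Z : (b:ℤ) * ((m:ℤ)+1) = (c + b) * ((m:ℤ) - j) := by
      have : ((m - j : ℕ) : ℤ) = (m : ℤ) - j := by omega
      rw [← this]
      exact_mod_cast r2
    have goal : ((m:ℤ)+1) * G = ((m+1).choose (j+2) : ℤ) * ((m+1).choose (j+1) : ℤ) := by
      rw [hpas1, hpas2]
      push_cast
      linear_combination ((m:ℤ)+1) * hGZ + (c + b) * r1Z + (b + a) * r2Z
    exact_mod_cast goal
  · -- k > n : everything vanishes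
    have hb0 : b = 0 := Nat.choose_eq_zero_of_lt (by omega)
    have ha0 : a = 0 := Nat.choose_eq_zero_of_lt (by omega)
    have hP0 : (m+1).choose (j+2) = 0 := Nat.choose_eq_zero_of_lt (by omega)
    rw [hb0, ha0] at hG
    simp at hG
    rw [hG, hP0]
    simp

/-! ### The reconstruction walk -/

lemma bool_fe (b : Bool) : b = false ∨ b = true := by cases b <;> simp

def stp (S T : Finset ℕ) : ℕ → ℕ × ℕ
  | 0 => (0, 0)
  | i+1 => let p := stp S T i
           if g S p.1 ≤ g T p.2 then (p.1 + 1, p.2) else (p.1, p.2 + 1)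

def bit (S T : Finset ℕ) (i : ℕ) : Bool := decide (g S (stp S T i).1 ≤ g T (stp S T i).2)

lemma stp_succ_up {S T : Finset ℕ} {i : ℕ} (h : bit S T i = true) :
    stp S T (i+1) = ((stp S T i).1 + 1, (stp S T i).2) := by
  simp only [bit, decide_eq_true_eq] at h
  simp only [stp, if_pos h]

lemma stp_succ_dn {S T : Finset ℕ} {i : ℕ} (h : bit S T i = false) :
    stp S T (i+1) = ((stp S T i).1, (stp S T i).2 + 1) := by
  simp only [bit, decide_eq_false_iff_not] at h
  simp only [stp, if_neg h]

lemma stp_sum (S T : Finset ℕ) (i : ℕ) : (stp S T i).1 + (stp S T i).2 = i := by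
  induction i with
  | zero => simp [stp]
  | succ i ih =>
    rcases bool_fe (bit S T i) with h | h
    · rw [stp_succ_dn h]; simp; omega
    · rw [stp_succ_up h]; simp; omega

lemma stp_fst_mono (S T : Finset ℕ) : Monotone (fun i => (stp S T i).1) := by
  apply monotone_nat_of_le_succ
  intro i
  rcases bool_fe (bit S T i) with h | h
  · rw [stp_succ_dn h]
  · rw [stp_succ_up h]; simp

lemma stp_snd_mono (S T : Finset ℕ) : Monotone (fun i => (stp S T i).2) := by
  apply monotone_nat_of_le_succ
  intro i
  rcases bool_fe (bit S T i) with h | h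
  · rw [stp_succ_dn h]; simp
  · rw [stp_succ_up h]

/-- crossing lemma for the first component -/
lemma stp_fst_cross (S T : Finset ℕ) {s N : ℕ} (hs : 1 ≤ s) (hN : s ≤ (stp S T N).1) :
    ∃ i < N, (stp S T i).1 + 1 = s ∧ (stp S T (i+1)).1 = s := by
  induction N with
  | zero => simp [stp] at hN; omega
  | succ N ih =>
    rcases le_or_gt s ((stp S T N).1) with h | h
    · obtain ⟨i, hi, h1, h2⟩ := ih h
      exact ⟨i, by omega, h1, h2⟩
    · rcases bool_fe (bit S T N) with hb | hb
      · rw [stp_succ_dn hb] at hN; simp at hN; omega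
      · have h1 : (stp S T N).1 + 1 = s := by
          rw [stp_succ_up hb] at hN; simp at hN; omega
        refine ⟨N, by omega, h1, ?_⟩
        rw [stp_succ_up hb]
        simpa using h1

lemma stp_snd_cross (S T : Finset ℕ) {s N : ℕ} (hs : 1 ≤ s) (hN : s ≤ (stp S T N).2) :
    ∃ i < N, (stp S T i).2 + 1 = s ∧ (stp S T (i+1)).2 = s := by
  induction N with
  | zero => simp [stp] at hN; omega
  | succ N ih =>
    rcases le_or_gt s ((stp S T N).2) with h | h
    · obtain ⟨i, hi, h1, h2⟩ := ih h
      exact ⟨i, by omega, h1, h2⟩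
    · rcases bool_fe (bit S T N) with hb | hb
      · have h1 : (stp S T N).2 + 1 = s := by
          rw [stp_succ_dn hb] at hN; simp at hN; omega
        refine ⟨N, by omega, h1, ?_⟩
        rw [stp_succ_dn hb]
        simpa using h1
      · rw [stp_succ_up hb] at hN; simp at hN; omega

/-- the setup hypotheses for the reconstruction -/
structure Setup (n k : ℕ) (S T : Finset ℕ) : Prop where
  hn : 1 ≤ n
  hS : S ⊆ Finset.Icc 1 n
  hT : T ⊆ Finset.Icc 1 n
  hnS : n ∈ S
  hnT : n ∈ T
  hSc : S.card = k
  hTc : T.card = k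
  hdom : ∀ c, g S c ≤ g T c

namespace Setup

variable {n k : ℕ} {S T : Finset ℕ} (st : Setup n k S T)

include st

lemma g_eq_k_iff {c : ℕ} : g T c = k ↔ n ≤ c := by
  constructor
  · intro h
    by_contra hc
    have : T.filter (· ≤ c) ⊂ T := by
      apply Finset.ssubset_iff_of_subset (Finset.filter_subset _ _) |>.mpr
      exact ⟨n, st.hnT, by simp; omega⟩
    have := Finset.card_lt_card this
    have hTc := st.hTc
    unfold g at h
    omega
  · intro h
    rw [g_eq_card st.hT (by omega), st.hTc]

lemma gS_le_k (c : ℕ) : g S c ≤ k := st.hSc ▸ g_le_card S c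

lemma gT_le_k (c : ℕ) : g T c ≤ k := st.hTc ▸ g_le_card T c

/-- nonnegativity invariant -/
lemma stp_nonneg : ∀ i, (stp S T i).2 ≤ (stp S T i).1 := by
  intro i
  induction i with
  | zero => simp [stp]
  | succ i ih =>
    rcases bool_fe (bit S T i) with hb | hb
    · rw [stp_succ_dn hb]
      simp only [bit, decide_eq_false_iff_not, not_le] at hb
      have h1 : g S (stp S T i).1 ≤ g T (stp S T i).1 := st.hdom _
      have h2 : (stp S T i).2 < (stp S T i).1 := by
        by_contra hc
        have := g_mono T (show (stp S T i).1 ≤ (stp S T i).2 by omega)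
        omega
      dsimp only
      omega
    · rw [stp_succ_up hb]
      dsimp only
      omega

/-- the balance invariant -/
lemma stp_bal : ∀ i, g T (stp S T i).2 ≤ g S (stp S T i).1 ∧
    g S (stp S T i).1 ≤ g T (stp S T i).2 + 1 := by
  intro i
  induction i with
  | zero =>
    simp only [stp]
    rw [g_zero st.hS, g_zero st.hT]
    omega
  | succ i ih =>
    rcases bool_fe (bit S T i) with hb | hb
    · have hb' := hb
      simp only [bit, decide_eq_false_iff_not, not_le] at hb'
      rw [stp_succ_dn hb]
      simp only
      have h1 : g T ((stp S T i).2 + 1) ≤ g T (stp S T i).2 + 1 := g_succ_le T _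
      have h2 : g T (stp S T i).2 ≤ g T ((stp S T i).2 + 1) := g_mono T (by omega)
      omega
    · have hb' := hb
      simp only [bit, decide_eq_true_eq] at hb'
      rw [stp_succ_up hb]
      simp only
      have h1 : g S ((stp S T i).1 + 1) ≤ g S (stp S T i).1 + 1 := g_succ_le S _
      have h2 : g S (stp S T i).1 ≤ g S ((stp S T i).1 + 1) := g_mono S (by omega)
      omega

/-- up steps happen exactly at balance -/
lemma stp_up_bal {i : ℕ} (hb : bit S T i = true) :
    g S (stp S T i).1 = g T (stp S T i).2 := by
  have h := st.stp_bal i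
  simp only [bit, decide_eq_true_eq] at hb
  omega

lemma stp_dn_bal {i : ℕ} (hb : bit S T i = false) :
    g S (stp S T i).1 = g T (stp S T i).2 + 1 := by
  have h := st.stp_bal i
  simp only [bit, decide_eq_false_iff_not, not_le] at hb
  omega

/-- boundedness: up to time 2n the walk stays in the box -/
lemma stp_box : ∀ i ≤ 2*n, (stp S T i).1 ≤ n ∧ (stp S T i).2 ≤ n := by
  intro i
  induction i with
  | zero => simp [stp]
  | succ i ih =>
    intro hi
    obtain ⟨ha, hb2⟩ := ih (by omega)
    have hsum := stp_sum S T i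
    rcases bool_fe (bit S T i) with hb | hb
    · rw [stp_succ_dn hb]
      simp only
      refine ⟨ha, ?_⟩
      -- if second comp = n, bit would be true
      by_contra hc
      have h2n : (stp S T i).2 = n := by omega
      have : g T (stp S T i).2 = k := (st.g_eq_k_iff).mpr (by omega)
      simp only [bit, decide_eq_false_iff_not, not_le] at hb
      have := st.gS_le_k (stp S T i).1
      omega
    · rw [stp_succ_up hb]
      simp only
      refine ⟨?_, hb2⟩
      by_contra hc
      have h1n : (stp S T i).1 = n := by omega
      have hgs : g S (stp S T i).1 = k := by
        rw [h1n, g_eq_card st.hS (le_refl n), st.hSc]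
      simp only [bit, decide_eq_true_eq] at hb
      rw [hgs] at hb
      have hTk : g T (stp S T i).2 = k := le_antisymm (st.gT_le_k _) hb
      have := st.g_eq_k_iff.mp hTk
      have hnn := st.stp_nonneg i
      omega

lemma stp_end : stp S T (2*n) = (n, n) := by
  have h := st.stp_box (2*n) (le_refl _)
  have hsum := stp_sum S T (2*n)
  have h1 : (stp S T (2*n)).1 = n := by omega
  have h2 : (stp S T (2*n)).2 = n := by omega
  rw [Prod.ext_iff]
  exact ⟨by simpa using h1, by simpa using h2⟩

end Setup

/-! ### The word generated by the walk -/

def psiWord (n : ℕ) (S T : Finset ℕ) : Fin (2*n) → Bool := fun x => bit S T x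

lemma ext_psi {n : ℕ} {S T : Finset ℕ} {i : ℕ} (hi : i < 2*n) :
    ext (psiWord n S T) i = bit S T i := by
  simp [ext, psiWord, hi]

lemma stp_eq_counts (n : ℕ) (S T : Finset ℕ) :
    ∀ i ≤ 2*n, stp S T i = (ups (ext (psiWord n S T)) i, dns (ext (psiWord n S T)) i) := by
  intro i
  induction i with
  | zero => intro _; simp [stp, ups, dns]
  | succ i ih =>
    intro hi
    have hi' : i < 2*n := by omega
    have he := ext_psi (n := n) (S := S) (T := T) hi'
    have ihe := ih (by omega)
    rcases bool_fe (bit S T i) with hb | hb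
    · rw [stp_succ_dn hb, ihe]
      rw [hb] at he
      rw [ups_succ_false he, dns_succ_false he]
    · rw [stp_succ_up hb, ihe]
      rw [hb] at he
      rw [ups_succ_true he, dns_succ_true he]

lemma ups_injOn_Pset (F : ℕ → Bool) (N : ℕ) :
    Set.InjOn (fun i => ups F (i+1)) ↑(Pset F N) := by
  intro i hi j hj hij
  simp only [Finset.coe_filter, Set.mem_setOf_eq, Pset, Finset.mem_coe, Finset.mem_filter] at hi hj
  dsimp only at hij
  by_contra hne
  rcases Nat.lt_or_ge i j with h | h
  · have h1 : ups F (j+1) = ups F j + 1 := ups_succ_true hj.2.1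
    have h2 : ups F (i+1) ≤ ups F j := ups_mono F (by omega)
    omega
  · have h : j < i := by omega
    have h1 : ups F (i+1) = ups F i + 1 := ups_succ_true hi.2.1
    have h2 : ups F (j+1) ≤ ups F i := ups_mono F (by omega)
    omega

lemma dns_injOn_Vset (F : ℕ → Bool) (N : ℕ) :
    Set.InjOn (fun i => dns F (i+1)) ↑(Vset F N) := by
  intro i hi j hj hij
  simp only [Finset.coe_filter, Set.mem_setOf_eq, Vset, Finset.mem_coe, Finset.mem_filter] at hi hj
  dsimp only at hij
  by_contra hne
  rcases Nat.lt_or_ge i j with h | h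
  · have h1 : dns F (j+1) = dns F j + 1 := dns_succ_false hj.2.1
    have h2 : dns F (i+1) ≤ dns F j := dns_mono F (by omega)
    omega
  · have h : j < i := by omega
    have h1 : dns F (i+1) = dns F i + 1 := dns_succ_false hi.2.1
    have h2 : dns F (j+1) ≤ dns F i := dns_mono F (by omega)
    omega

namespace Setup

variable {n k : ℕ} {S T : Finset ℕ} (st : Setup n k S T)

include st

lemma up_then_dn {i : ℕ} (hb : bit S T i = true) :
    bit S T (i+1) = false ↔ (stp S T i).1 + 1 ∈ S := by
  have hbal := st.stp_up_bal hb
  have hstep := stp_succ_up hb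
  have hgs := g_succ S (stp S T i).1
  constructor
  · intro h
    simp only [bit, decide_eq_false_iff_not, not_le, hstep] at h
    by_contra hc
    rw [if_neg hc] at hgs
    omega
  · intro h
    rw [if_pos h] at hgs
    simp only [bit, decide_eq_false_iff_not, not_le, hstep]
    omega

lemma dn_then_up {i : ℕ} (hb : bit S T i = false) :
    bit S T (i+1) = true ↔ (stp S T i).2 + 1 ∈ T := by
  have hbal := st.stp_dn_bal hb
  have hstep := stp_succ_dn hb
  have hgs := g_succ T (stp S T i).2
  constructor
  · intro h
    simp only [bit, decide_eq_true_eq, hstep] at h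
    by_contra hc
    rw [if_neg hc] at hgs
    omega
  · intro h
    rw [if_pos h] at hgs
    simp only [bit, decide_eq_true_eq, hstep]
    omega

lemma mem_Pset_iff {i : ℕ} :
    i ∈ Pset (ext (psiWord n S T)) (2*n) ↔
      i < 2*n - 1 ∧ bit S T i = true ∧ bit S T (i+1) = false := by
  unfold Pset
  simp only [Finset.mem_filter, Finset.mem_range]
  constructor
  · rintro ⟨h1, h2, h3⟩
    have hn := st.hn
    exact ⟨h1, by rwa [ext_psi (by omega)] at h2, by rwa [ext_psi (by omega)] at h3⟩
  · rintro ⟨h1, h2, h3⟩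
    have hn := st.hn
    exact ⟨h1, by rwa [ext_psi (by omega)], by rwa [ext_psi (by omega)]⟩

lemma mem_Vset_iff {i : ℕ} :
    i ∈ Vset (ext (psiWord n S T)) (2*n) ↔
      i < 2*n - 1 ∧ bit S T i = false ∧ bit S T (i+1) = true := by
  unfold Vset
  simp only [Finset.mem_filter, Finset.mem_range]
  constructor
  · rintro ⟨h1, h2, h3⟩
    have hn := st.hn
    exact ⟨h1, by rwa [ext_psi (by omega)] at h2, by rwa [ext_psi (by omega)] at h3⟩
  · rintro ⟨h1, h2, h3⟩
    have hn := st.hn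
    exact ⟨h1, by rwa [ext_psi (by omega)], by rwa [ext_psi (by omega)]⟩

lemma Pset_image :
    (Pset (ext (psiWord n S T)) (2*n)).image (fun i => ups (ext (psiWord n S T)) (i+1)) = S := by
  apply Finset.Subset.antisymm
  · intro s hs
    simp only [Finset.mem_image] at hs
    obtain ⟨i, hi, rfl⟩ := hs
    rw [st.mem_Pset_iff] at hi
    obtain ⟨h1, h2, h3⟩ := hi
    have hcnt := stp_eq_counts n S T (i+1) (by omega)
    have : ups (ext (psiWord n S T)) (i+1) = (stp S T (i+1)).1 := by rw [hcnt]
    rw [this, stp_succ_up h2]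
    exact (st.up_then_dn h2).mp h3
  · intro s hs
    have hsIcc := st.hS hs
    simp only [Finset.mem_Icc] at hsIcc
    have hcr : s ≤ (stp S T (2*n)).1 := by rw [st.stp_end]; exact hsIcc.2
    obtain ⟨i, hi, h1, h2⟩ := stp_fst_cross S T hsIcc.1 hcr
    have hup : bit S T i = true := by
      rcases bool_fe (bit S T i) with hb | hb
      · rw [stp_succ_dn hb] at h2; dsimp at h2; omega
      · exact hb
    have hne : i ≠ 2*n - 1 := by
      intro he
      have hnn := st.stp_nonneg i
      have he2 : i + 1 = 2*n := by have := st.hn; omega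
      have := st.stp_end
      rw [← he2, stp_succ_up hup] at this
      rw [Prod.ext_iff] at this
      dsimp at this
      omega
    simp only [Finset.mem_image]
    refine ⟨i, ?_, ?_⟩
    · rw [st.mem_Pset_iff]
      refine ⟨by omega, hup, ?_⟩
      rw [st.up_then_dn hup]
      rwa [h1]
    · have hcnt := stp_eq_counts n S T (i+1) (by omega)
      have : ups (ext (psiWord n S T)) (i+1) = (stp S T (i+1)).1 := by rw [hcnt]
      rw [this, h2]

lemma Vset_image :
    (Vset (ext (psiWord n S T)) (2*n)).image (fun i => dns (ext (psiWord n S T)) (i+1)) = T.erase n := by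
  apply Finset.Subset.antisymm
  · intro t ht
    simp only [Finset.mem_image] at ht
    obtain ⟨i, hi, rfl⟩ := ht
    rw [st.mem_Vset_iff] at hi
    obtain ⟨h1, h2, h3⟩ := hi
    have hcnt := stp_eq_counts n S T (i+1) (by omega)
    have hv : dns (ext (psiWord n S T)) (i+1) = (stp S T (i+1)).2 := by rw [hcnt]
    have hmem : (stp S T i).2 + 1 ∈ T := (st.dn_then_up h2).mp h3
    have hvv : (stp S T (i+1)).2 = (stp S T i).2 + 1 := by rw [stp_succ_dn h2]
    rw [Finset.mem_erase]
    refine ⟨?_, by rw [hv, hvv]; exact hmem⟩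
    -- value ≠ n
    intro hc
    rw [hv, hvv] at hc
    have hbox := st.stp_box (i+1) (by omega)
    have hnn := st.stp_nonneg (i+1)
    have hsum := stp_sum S T (i+1)
    rw [stp_succ_dn h2] at hbox hnn hsum
    dsimp at hbox hnn hsum
    omega
  · intro t ht
    rw [Finset.mem_erase] at ht
    obtain ⟨htn, htT⟩ := ht
    have htIcc := st.hT htT
    simp only [Finset.mem_Icc] at htIcc
    have hcr : t ≤ (stp S T (2*n)).2 := by rw [st.stp_end]; exact htIcc.2
    obtain ⟨i, hi, h1, h2⟩ := stp_snd_cross S T htIcc.1 hcr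
    have hdn : bit S T i = false := by
      rcases bool_fe (bit S T i) with hb | hb
      · exact hb
      · rw [stp_succ_up hb] at h2; dsimp at h2; omega
    have hne : i ≠ 2*n - 1 := by
      intro he
      have he2 : i + 1 = 2*n := by have := st.hn; omega
      have := st.stp_end
      rw [← he2, stp_succ_dn hdn] at this
      rw [Prod.ext_iff] at this
      dsimp at this
      omega
    simp only [Finset.mem_image]
    refine ⟨i, ?_, ?_⟩
    · rw [st.mem_Vset_iff]
      refine ⟨by omega, hdn, ?_⟩
      rw [st.dn_then_up hdn]
      rwa [h1]
    · have hcnt := stp_eq_counts n S T (i+1) (by omega)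
      have : dns (ext (psiWord n S T)) (i+1) = (stp S T (i+1)).2 := by rw [hcnt]
      rw [this, h2]

lemma psi_endpoint : pathVal (psiWord n S T) (2*n) = 0 := by
  rw [pathVal_eq (psiWord n S T) (le_refl (2*n))]
  have := stp_eq_counts n S T (2*n) (le_refl _)
  rw [st.stp_end] at this
  rw [Prod.ext_iff] at this
  dsimp at this
  omega

lemma psi_nonneg : IsNonneg (psiWord n S T) := by
  intro i hi
  rw [Finset.mem_range] at hi
  rw [pathVal_eq (psiWord n S T) (by omega)]
  have hc := stp_eq_counts n S T i (by omega)
  have hnn := st.stp_nonneg i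
  rw [hc] at hnn
  dsimp at hnn
  omega

lemma psi_numPeaks : numPeaks (psiWord n S T) = k := by
  rw [numPeaks_eq]
  have himg := st.Pset_image
  have hinj := ups_injOn_Pset (ext (psiWord n S T)) (2*n)
  have := Finset.card_image_of_injOn hinj
  rw [himg] at this
  rw [← this, st.hSc]

end Setup

/-! ### From excursions to pairs -/

lemma ups_const {F : ℕ → Bool} {c d : ℕ} (hcd : c ≤ d)
    (h : ∀ t, c ≤ t → t < d → F t = false) : ups F d = ups F c := by
  induction d with
  | zero => have : c = 0 := by omega
            rw [this]
  | succ d ih =>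
    rcases Nat.lt_or_ge c (d+1) with h' | h'
    · have hd : F d = false := h d (by omega) (by omega)
      rw [ups_succ_false hd, ih (by omega) (fun t ht ht' => h t ht (by omega))]
    · have : c = d + 1 := by omega
      rw [this]

lemma dns_const {F : ℕ → Bool} {c d : ℕ} (hcd : c ≤ d)
    (h : ∀ t, c ≤ t → t < d → F t = true) : dns F d = dns F c := by
  induction d with
  | zero => have : c = 0 := by omega
            rw [this]
  | succ d ih =>
    rcases Nat.lt_or_ge c (d+1) with h' | h'
    · have hd : F d = true := h d (by omega) (by omega)
      rw [dns_succ_true hd, ih (by omega) (fun t ht ht' => h t ht (by omega))]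
    · have : c = d + 1 := by omega
      rw [this]

/-- the greatest `t < q` with `F t = true` (assuming `F 0 = true`, `1 ≤ q`) -/
def rho (F : ℕ → Bool) (q : ℕ) : ℕ := Nat.findGreatest (fun t => F t = true) (q-1)

lemma rho_lt {F : ℕ → Bool} {q : ℕ} (hq : 1 ≤ q) : rho F q < q := by
  have := Nat.findGreatest_le (P := fun t => F t = true) (q-1)
  unfold rho
  omega

lemma rho_true {F : ℕ → Bool} (q : ℕ) (h0 : F 0 = true) : F (rho F q) = true := by
  unfold rho
  exact Nat.findGreatest_spec (P := fun t => F t = true) (Nat.zero_le _) h0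

lemma rho_max {F : ℕ → Bool} (q : ℕ) {t : ℕ} (hlt : rho F q < t) (ht : t ≤ q - 1) : F t = false := by
  have := Nat.findGreatest_is_greatest (P := fun t => F t = true) hlt ht
  simpa using this

lemma rho_junction {F : ℕ → Bool} {q : ℕ} (hq : 1 ≤ q) (hqf : F q = false) (h0 : F 0 = true) :
    F (rho F q + 1) = false := by
  rcases Nat.lt_or_ge (rho F q + 1) q with h | h
  · exact rho_max q (by omega) (by omega)
  · have := rho_lt (F := F) hq
    have : rho F q + 1 = q := by omega
    rw [this, hqf]

lemma ups_rho {F : ℕ → Bool} {q : ℕ} (hq : 1 ≤ q) (hqf : F q = false) (h0 : F 0 = true) :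
    ups F (q+1) = ups F (rho F q + 1) := by
  apply ups_const
  · have := rho_lt (F := F) hq
    omega
  · intro t ht ht'
    rcases Nat.lt_or_ge t q with h | h
    · exact rho_max q (by omega) (by omega)
    · have : t = q := by omega
      rw [this, hqf]

-- the least `t ≥ p+1` with `F t = true` (when it exists; junk otherwise)
open Classical in
noncomputable def fta (F : ℕ → Bool) (p : ℕ) : ℕ :=
  if h : ∃ t, p+1 ≤ t ∧ F t = true then Nat.find h else 0

lemma fta_spec {F : ℕ → Bool} {p : ℕ} (h : ∃ t, p+1 ≤ t ∧ F t = true) :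
    p + 1 ≤ fta F p ∧ F (fta F p) = true ∧ ∀ t, p+1 ≤ t → F t = true → fta F p ≤ t := by
  unfold fta
  rw [dif_pos h]
  obtain ⟨h1, h2⟩ := Nat.find_spec h
  exact ⟨h1, h2, fun t ht htt => Nat.find_min' h ⟨ht, htt⟩⟩

lemma fta_ge {F : ℕ → Bool} {p : ℕ} (h : ∃ t, p+1 ≤ t ∧ F t = true)
    (hp1 : F (p+1) = false) : p + 2 ≤ fta F p := by
  obtain ⟨h1, h2, _⟩ := fta_spec h
  rcases Nat.lt_or_ge (p+1) (fta F p) with h' | h'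
  · omega
  · have : fta F p = p+1 := by omega
    rw [this, hp1] at h2
    simp at h2

lemma fta_prev_false {F : ℕ → Bool} {p : ℕ} (h : ∃ t, p+1 ≤ t ∧ F t = true)
    (hp1 : F (p+1) = false) : F (fta F p - 1) = false := by
  have hge := fta_ge h hp1
  obtain ⟨h1, h2, hmin⟩ := fta_spec h
  rcases bool_fe (F (fta F p - 1)) with hb | hb
  · exact hb
  · have := hmin (fta F p - 1) (by omega) hb
    omega

lemma ups_fta {F : ℕ → Bool} {p : ℕ} (h : ∃ t, p+1 ≤ t ∧ F t = true) :
    ups F (fta F p) = ups F (p+1) := by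
  obtain ⟨h1, h2, hmin⟩ := fta_spec h
  apply ups_const h1
  intro t ht ht'
  rcases bool_fe (F t) with hb | hb
  · exact hb
  · have := hmin t ht hb
    omega

/-- excursion hypotheses in counting form -/
structure Exc (n : ℕ) (F : ℕ → Bool) : Prop where
  hn : 1 ≤ n
  hF : ∀ j, F j = true → j < 2*n
  hend : ups F (2*n) = n
  hnn : ∀ i ≤ 2*n, dns F i ≤ ups F i

def Sfin (F : ℕ → Bool) (n : ℕ) : Finset ℕ := (Pset F (2*n)).image (fun i => ups F (i+1))
def Tfin (F : ℕ → Bool) (n : ℕ) : Finset ℕ := (Vset F (2*n)).image (fun i => dns F (i+1))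

namespace Exc

variable {n : ℕ} {F : ℕ → Bool} (ex : Exc n F)

include ex

lemma hend' : dns F (2*n) = n := by
  have := ups_add_dns F (2*n)
  have := ex.hend
  omega

lemma hF0 : F 0 = true := by
  rcases bool_fe (F 0) with hb | hb
  · have h1 : dns F 1 = 1 := by
      rw [show (1:ℕ) = 0 + 1 from rfl, dns_succ_false hb]
      simp [dns]
    have h2 : ups F 1 = 0 := by
      rw [show (1:ℕ) = 0 + 1 from rfl, ups_succ_false hb]
      simp [ups]
    have := ex.hnn 1 (by have := ex.hn; omega)
    omega
  · exact hb

lemma hFlast : F (2*n - 1) = false := by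
  rcases bool_fe (F (2*n-1)) with hb | hb
  · exact hb
  · have hn := ex.hn
    have he : 2*n - 1 + 1 = 2*n := by omega
    have h1 : ups F (2*n) = ups F (2*n-1) + 1 := by
      rw [← he]; exact ups_succ_true hb
    have h2 : dns F (2*n) = dns F (2*n-1) := by
      rw [← he]; exact dns_succ_true hb
    have h3 := ex.hnn (2*n-1) (by omega)
    have h4 := ex.hend
    have h5 := ex.hend'
    omega

lemma tele : (Pset F (2*n)).card = (Vset F (2*n)).card + 1 := by
  have hm : 1 ≤ 2*n - 1 + 1 := by omega
  set m := 2*n - 1 with hmdef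
  have hP : ((Pset F (2*n)).card : ℤ)
      = ∑ i ∈ Finset.range m, (if F i = true ∧ F (i+1) = false then (1:ℤ) else 0) := by
    unfold Pset
    rw [Finset.card_filter]
    push_cast
    apply Finset.sum_congr rfl
    intro i _
    split <;> simp
  have hV : ((Vset F (2*n)).card : ℤ)
      = ∑ i ∈ Finset.range m, (if F i = false ∧ F (i+1) = true then (1:ℤ) else 0) := by
    unfold Vset
    rw [Finset.card_filter]
    push_cast
    apply Finset.sum_congr rfl
    intro i _
    split <;> simp
  have hsum := Finset.sum_range_sub' (fun i => if F i = true then (1:ℤ) else 0) m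
  have hkey : ∀ i ∈ Finset.range m,
      ((if F i = true ∧ F (i+1) = false then (1:ℤ) else 0)
        - (if F i = false ∧ F (i+1) = true then (1:ℤ) else 0))
      = ((if F i = true then (1:ℤ) else 0) - (if F (i+1) = true then (1:ℤ) else 0)) := by
    intro i _
    rcases bool_fe (F i) with h | h <;> rcases bool_fe (F (i+1)) with h' | h' <;> simp [h, h']
  have hcomb : ((Pset F (2*n)).card : ℤ) - ((Vset F (2*n)).card : ℤ)
      = (if F 0 = true then (1:ℤ) else 0) - (if F m = true then (1:ℤ) else 0) := by
    rw [hP, hV, ← Finset.sum_sub_distrib, Finset.sum_congr rfl hkey, hsum]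
  rw [ex.hF0, ex.hFlast] at hcomb
  simp at hcomb
  omega

lemma n_mem_Sfin : n ∈ Sfin F n := by
  have hn := ex.hn
  have h0 := ex.hF0
  have hlast := ex.hFlast
  have hq : 1 ≤ 2*n - 1 := by omega
  set p := rho F (2*n-1) with hp
  have hpt : F p = true := rho_true _ h0
  have hplt : p < 2*n - 1 := rho_lt hq
  have hpj : F (p+1) = false := rho_junction hq hlast h0
  have hups : ups F (2*n - 1 + 1) = ups F (p+1) := ups_rho hq hlast h0
  have he : 2*n - 1 + 1 = 2*n := by omega
  rw [he] at hups
  unfold Sfin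
  simp only [Finset.mem_image]
  refine ⟨p, ?_, by rw [← hups, ex.hend]⟩
  unfold Pset
  simp only [Finset.mem_filter, Finset.mem_range]
  exact ⟨hplt, hpt, hpj⟩

end Exc

lemma g_image_filter {P : Finset ℕ} {v : ℕ → ℕ} (hinj : Set.InjOn v ↑P) (j : ℕ) :
    g (P.image v) j = (P.filter (fun i => v i ≤ j)).card := by
  unfold g
  rw [Finset.filter_image]
  apply Finset.card_image_of_injOn
  exact hinj.mono (by exact_mod_cast Finset.filter_subset _ _)

lemma g_erase_of_lt {X : Finset ℕ} {a j : ℕ} (hj : j < a) : g (X.erase a) j = g X j := by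
  unfold g
  congr 1
  ext x
  simp only [Finset.mem_filter, Finset.mem_erase]
  constructor
  · rintro ⟨⟨_, hx⟩, hle⟩; exact ⟨hx, hle⟩
  · rintro ⟨hx, hle⟩; exact ⟨⟨by omega, hx⟩, hle⟩

lemma g_insert_of_lt {X : Finset ℕ} {a j : ℕ} (hj : j < a) : g (insert a X) j = g X j := by
  unfold g
  rw [Finset.filter_insert, if_neg (by omega)]

lemma g_le_of_subset {X Y : Finset ℕ} (h : X ⊆ Y) (c : ℕ) : g X c ≤ g Y c :=
  Finset.card_le_card (Finset.filter_subset_filter _ h)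

lemma fta_junk {F : ℕ → Bool} {p : ℕ} (h : ¬ ∃ t, p+1 ≤ t ∧ F t = true) : fta F p = 0 := by
  unfold fta
  rw [dif_neg h]

lemma fta_injOn_Pset (F : ℕ → Bool) (N : ℕ) :
    Set.InjOn (fun p => fta F p - 1) ↑(Pset F N) := by
  have key : ∀ p q : ℕ, p ∈ Pset F N → q ∈ Pset F N → p < q → fta F p - 1 ≠ fta F q - 1 := by
    intro p q hp hq hpq
    simp only [Pset, Finset.coe_filter, Finset.mem_coe, Finset.mem_filter, Finset.mem_range] at hp hq
    have hexp : ∃ t, p+1 ≤ t ∧ F t = true := ⟨q, by omega, hq.2.1⟩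
    obtain ⟨hp1, hpt, hpmin⟩ := fta_spec hexp
    have hgep := fta_ge hexp hp.2.2
    have hlep : fta F p ≤ q := hpmin q (by omega) hq.2.1
    by_cases hexq : ∃ t, q+1 ≤ t ∧ F t = true
    · have hgeq := fta_ge hexq hq.2.2
      omega
    · rw [fta_junk hexq]
      omega
  intro p hp q hq heq
  dsimp only at heq
  by_contra hne
  rcases Nat.lt_or_ge p q with h | h
  · exact key p q hp hq h heq
  · exact key q p hq hp (by omega) heq.symm

namespace Exc

variable {n : ℕ} {F : ℕ → Bool} (ex : Exc n F)

include ex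

lemma Sfin_range : ∀ s ∈ Sfin F n, 1 ≤ s ∧ s ≤ n := by
  intro s hs
  unfold Sfin at hs
  simp only [Finset.mem_image] at hs
  obtain ⟨p, hp, rfl⟩ := hs
  simp only [Pset, Finset.mem_filter, Finset.mem_range] at hp
  constructor
  · rw [ups_succ_true hp.2.1]; omega
  · calc ups F (p+1) ≤ ups F (2*n) := ups_mono F (by omega)
      _ = n := ex.hend

lemma Tfin_range : ∀ t ∈ Tfin F n, 1 ≤ t ∧ t ≤ n - 1 := by
  intro t ht
  unfold Tfin at ht
  simp only [Finset.mem_image] at ht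
  obtain ⟨q, hq, rfl⟩ := ht
  simp only [Vset, Finset.mem_filter, Finset.mem_range] at hq
  have h1 : 1 ≤ dns F (q+1) := by rw [dns_succ_false hq.2.1]; omega
  refine ⟨h1, ?_⟩
  -- if dns (q+1) were n, then no falses at all in [q+1, 2n); but F (2n-1) = false
  have hlast := ex.hFlast
  have hmono : dns F (q+1) + 1 ≤ dns F (2*n) := by
    have h2 : dns F (2*n) = dns F (2*n - 1) + 1 := by
      have he : 2*n - 1 + 1 = 2*n := by have := ex.hn; omega
      have h2x := dns_succ_false hlast
      rw [he] at h2x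
      exact h2x
    have h3 : dns F (q+1) ≤ dns F (2*n-1) := dns_mono F (by omega)
    omega
  have := ex.hend'
  omega

/-- counting: at an up-step the peak count is dominated by the valley count -/
lemma count_true {i : ℕ} (hi : i < 2*n) (hit : F i = true) :
    g (Sfin F n) (ups F i) ≤ g (Tfin F n) (dns F i) := by
  unfold Sfin Tfin
  rw [g_image_filter (ups_injOn_Pset F (2*n)), g_image_filter (dns_injOn_Vset F (2*n))]
  apply Finset.card_le_card_of_injOn (fun p => fta F p - 1)
  · intro p hp
    simp only [Finset.mem_coe, Finset.mem_filter] at hp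
    obtain ⟨hpP, hpv⟩ := hp
    simp only [Pset, Finset.mem_filter, Finset.mem_range] at hpP
    obtain ⟨hpr, hpt, hpf⟩ := hpP
    have hpi : p < i := by
      by_contra hc
      have h1 : ups F (p+1) = ups F p + 1 := ups_succ_true hpt
      have h2 : ups F i ≤ ups F p := ups_mono F (by omega)
      omega
    have hexp : ∃ t, p+1 ≤ t ∧ F t = true := ⟨i, by omega, hit⟩
    obtain ⟨hp1, hptt, hpmin⟩ := fta_spec hexp
    have hge := fta_ge hexp hpf
    have hle : fta F p ≤ i := hpmin i (by omega) hit
    have hprev := fta_prev_false hexp hpf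
    have he : fta F p - 1 + 1 = fta F p := by omega
    simp only [Finset.mem_coe, Finset.mem_filter, Vset, Finset.mem_range]
    refine ⟨⟨by omega, hprev, by rw [he]; exact hptt⟩, ?_⟩
    rw [he]
    have := ups_fta hexp
    calc dns F (fta F p) ≤ dns F i := dns_mono F hle
      _ = dns F i := rfl
  · exact (fta_injOn_Pset F (2*n)).mono (by exact_mod_cast Finset.filter_subset _ _)

/-- counting: at a down-step the valley count is strictly below the peak count -/
lemma count_false {i : ℕ} (hi : i < 2*n) (hif : F i = false) :
    g (Tfin F n) (dns F i) + 1 ≤ g (Sfin F n) (ups F i) := by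
  unfold Sfin Tfin
  rw [g_image_filter (ups_injOn_Pset F (2*n)), g_image_filter (dns_injOn_Vset F (2*n))]
  have h0 := ex.hF0
  have hi1 : 1 ≤ i := by
    rcases Nat.eq_zero_or_pos i with h | h
    · rw [h] at hif; rw [h0] at hif; simp at hif
    · omega
  set Vj := (Vset F (2*n)).filter (fun q => dns F (q+1) ≤ dns F i) with hVj
  have hiV : i ∉ Vj := by
    simp only [hVj, Finset.mem_filter]
    rintro ⟨_, hv⟩
    rw [dns_succ_false hif] at hv
    omega
  have hcard : (insert i Vj).card = Vj.card + 1 := Finset.card_insert_of_notMem hiV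
  have hmem : ∀ q ∈ insert i Vj, F q = false ∧ 1 ≤ q ∧ q ≤ i ∧ ups F (q+1) ≤ ups F i := by
    intro q hq
    rw [Finset.mem_insert] at hq
    rcases hq with rfl | hq
    · exact ⟨hif, hi1, le_refl _, by rw [ups_succ_false hif]⟩
    · simp only [hVj, Finset.mem_filter, Vset, Finset.mem_range] at hq
      obtain ⟨⟨hqr, hqf, hqt⟩, hqv⟩ := hq
      have hqi : q < i := by
        by_contra hc
        have h1 : dns F (q+1) = dns F q + 1 := dns_succ_false hqf
        have h2 : dns F i ≤ dns F q := dns_mono F (by omega)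
        omega
      have h1 : 1 ≤ q := by
        rcases Nat.eq_zero_or_pos q with h | h
        · rw [h] at hqf; rw [h0] at hqf; simp at hqf
        · omega
      exact ⟨hqf, h1, by omega, by
        calc ups F (q+1) ≤ ups F i := ups_mono F (by omega)⟩
  have hstep : (insert i Vj).card ≤ ((Pset F (2*n)).filter (fun p => ups F (p+1) ≤ ups F i)).card := by
    apply Finset.card_le_card_of_injOn (fun q => rho F q)
    · intro q hq
      obtain ⟨hqf, hq1, hqi, hqv⟩ := hmem q hq
      have hrt : F (rho F q) = true := rho_true q h0
      have hrlt : rho F q < q := rho_lt hq1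
      have hrj : F (rho F q + 1) = false := rho_junction hq1 hqf h0
      have hru : ups F (q+1) = ups F (rho F q + 1) := ups_rho hq1 hqf h0
      simp only [Finset.mem_coe, Finset.mem_filter, Pset, Finset.mem_range]
      refine ⟨⟨by omega, hrt, hrj⟩, by omega⟩
    · intro q hq q' hq' heq
      dsimp only at heq
      by_contra hne
      -- wlog q < q'
      have key : ∀ a b : ℕ, a ∈ insert i Vj → b ∈ insert i Vj → a < b → rho F a ≠ rho F b := by
        intro a b ha hb hab
        obtain ⟨haf, ha1, hai, _⟩ := hmem a ha
        obtain ⟨hbf, hb1, hbi, _⟩ := hmem b hb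
        -- a ∈ Vj since a < b ≤ i
        have haV : a ∈ Vj := by
          have : a ≠ i := by omega
          rcases Finset.mem_insert.mp ha with h | h
          · omega
          · exact h
        simp only [hVj, Finset.mem_filter, Vset, Finset.mem_range] at haV
        have hat : F (a+1) = true := haV.1.2.2
        have ha1b : a + 1 < b := by
          rcases Nat.lt_or_ge (a+1) b with h | h
          · exact h
          · have : a + 1 = b := by omega
            rw [this] at hat
            rw [hat] at hbf
            simp at hbf
        have hge : a + 1 ≤ rho F b := Nat.le_findGreatest (by omega) hat
        have hlt : rho F a < a := rho_lt ha1
        omega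
      rcases Nat.lt_or_ge q q' with hqq | hqq
      · exact key q q' (by exact_mod_cast hq) (by exact_mod_cast hq') hqq heq
      · have hqq' : q' < q := by omega
        exact key q' q (by exact_mod_cast hq') (by exact_mod_cast hq) hqq' heq.symm
  -- combine
  calc Vj.card + 1 = (insert i Vj).card := hcard.symm
    _ ≤ _ := hstep

end Exc

namespace Exc

variable {n : ℕ} {F : ℕ → Bool} (ex : Exc n F)

include ex

/-- dominance of the extracted pair -/
lemma dom_phi {j : ℕ} (hj : j ≤ n - 1) : g (Sfin F n) j ≤ g (Tfin F n) j := by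
  unfold Sfin Tfin
  rw [g_image_filter (ups_injOn_Pset F (2*n)), g_image_filter (dns_injOn_Vset F (2*n))]
  apply Finset.card_le_card_of_injOn (fun p => fta F p - 1)
  · intro p hp
    simp only [Finset.mem_coe, Finset.mem_filter] at hp
    obtain ⟨hpP, hpv⟩ := hp
    simp only [Pset, Finset.mem_filter, Finset.mem_range] at hpP
    obtain ⟨hpr, hpt, hpf⟩ := hpP
    have hn := ex.hn
    have hexp : ∃ t, p+1 ≤ t ∧ F t = true := by
      by_contra hno
      push_neg at hno
      have hc : ups F (2*n) = ups F (p+1) := by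
        apply ups_const (by omega)
        intro t ht _
        rcases bool_fe (F t) with hb | hb
        · exact hb
        · exact absurd hb (hno t ht)
      rw [ex.hend] at hc
      omega
    obtain ⟨hp1, hptt, hpmin⟩ := fta_spec hexp
    have hge := fta_ge hexp hpf
    have hlt2n : fta F p < 2*n := ex.hF _ hptt
    have hprev := fta_prev_false hexp hpf
    have he : fta F p - 1 + 1 = fta F p := by omega
    simp only [Finset.mem_coe, Finset.mem_filter, Vset, Finset.mem_range]
    refine ⟨⟨by omega, hprev, by rw [he]; exact hptt⟩, ?_⟩
    rw [he]
    have hupf := ups_fta hexp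
    have hnn := ex.hnn (fta F p) (by omega)
    omega
  · exact (fta_injOn_Pset F (2*n)).mono (by exact_mod_cast Finset.filter_subset _ _)

lemma dns_lt_n {i : ℕ} (hi : i < 2*n) (hif : F i = false) : dns F i < n := by
  have h1 : dns F (i+1) = dns F i + 1 := dns_succ_false hif
  have h2 : dns F (i+1) ≤ dns F (2*n) := dns_mono F (by omega)
  have := ex.hend'
  omega

lemma char (hk : (Pset F (2*n)).card = (Pset F (2*n)).card) {i : ℕ} (hi : i < 2*n) :
    decide (g (Sfin F n) (ups F i) ≤ g (insert n (Tfin F n)) (dns F i)) = F i := by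
  rcases bool_fe (F i) with h | h
  · rw [h]
    apply decide_eq_false
    have hd := ex.dns_lt_n hi h
    rw [g_insert_of_lt hd]
    have := ex.count_false hi h
    omega
  · rw [h]
    apply decide_eq_true
    calc g (Sfin F n) (ups F i) ≤ g (Tfin F n) (dns F i) := ex.count_true hi h
      _ ≤ g (insert n (Tfin F n)) (dns F i) := g_le_of_subset (Finset.subset_insert _ _) _

lemma n_not_mem_Tfin : n ∉ Tfin F n := by
  intro h
  have := ex.Tfin_range n h
  have := ex.hn
  omega

lemma Sfin_card : (Sfin F n).card = (Pset F (2*n)).card :=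
  Finset.card_image_of_injOn (ups_injOn_Pset F (2*n))

lemma Tfin_card : (Tfin F n).card = (Vset F (2*n)).card :=
  Finset.card_image_of_injOn (dns_injOn_Vset F (2*n))

lemma toSetup : Setup n ((Pset F (2*n)).card) (Sfin F n) (insert n (Tfin F n)) := by
  have hn := ex.hn
  have hSsub : Sfin F n ⊆ Finset.Icc 1 n := by
    intro s hs
    have := ex.Sfin_range s hs
    simp only [Finset.mem_Icc]
    omega
  have hTsub : insert n (Tfin F n) ⊆ Finset.Icc 1 n := by
    intro t ht
    rcases Finset.mem_insert.mp ht with rfl | ht'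
    · simp only [Finset.mem_Icc]; omega
    · have := ex.Tfin_range t ht'
      simp only [Finset.mem_Icc]
      omega
  have hScard : (Sfin F n).card = (Pset F (2*n)).card := ex.Sfin_card
  have hTcard : (insert n (Tfin F n)).card = (Pset F (2*n)).card := by
    rw [Finset.card_insert_of_notMem ex.n_not_mem_Tfin, ex.Tfin_card, ex.tele]
  refine ⟨hn, hSsub, hTsub, ex.n_mem_Sfin, Finset.mem_insert_self _ _, hScard, hTcard, ?_⟩
  intro c
  rcases Nat.lt_or_ge c n with hc | hc
  · rw [g_insert_of_lt hc]
    calc g (Sfin F n) c ≤ g (Tfin F n) c := ex.dom_phi (by omega)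
      _ = g (Tfin F n) c := rfl
  · rw [g_eq_card hSsub hc, g_eq_card hTsub hc, hScard, hTcard]

lemma recon : ∀ i ≤ 2*n, stp (Sfin F n) (insert n (Tfin F n)) i = (ups F i, dns F i) := by
  intro i
  induction i with
  | zero => intro _; simp [stp, ups, dns]
  | succ i ih =>
    intro hi
    have hpi := ih (by omega)
    have hbit : bit (Sfin F n) (insert n (Tfin F n)) i = F i := by
      unfold bit
      rw [hpi]
      exact ex.char rfl (by omega)
    rcases bool_fe (F i) with h | h
    · rw [stp_succ_dn (by rw [hbit, h]), hpi]
      rw [ups_succ_false h, dns_succ_false h]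
    · rw [stp_succ_up (by rw [hbit, h]), hpi]
      rw [ups_succ_true h, dns_succ_true h]

lemma psi_phi_word : ∀ x, x < 2*n → bit (Sfin F n) (insert n (Tfin F n)) x = F x := by
  intro x hx
  have := ex.recon x (by omega)
  unfold bit
  rw [this]
  exact ex.char rfl hx

end Exc

/-! ### Assembly -/

lemma exc_of_mem {n : ℕ} (hn : 1 ≤ n) {f : Fin (2*n) → Bool}
    (h1 : pathVal f (2*n) = 0) (h2 : IsNonneg f) : Exc n (ext f) := by
  have hud := ups_add_dns (ext f) (2*n)
  have hpv := pathVal_eq f (le_refl (2*n))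
  rw [h1] at hpv
  refine ⟨hn, ?_, by omega, ?_⟩
  · intro j hj
    by_contra hc
    simp only [ext, dif_neg (by omega : ¬ j < 2*n)] at hj
    exact Bool.false_ne_true hj
  · intro i hi
    have hnn := h2 i (Finset.mem_range.mpr (by omega))
    have := pathVal_eq f hi
    omega

def Phi {n : ℕ} (f : Fin (2*n) → Bool) : Finset ℕ × Finset ℕ :=
  ((Sfin (ext f) n).erase n, Tfin (ext f) n)

noncomputable def Psi {n : ℕ} (p : Finset ℕ × Finset ℕ) : Fin (2*n) → Bool :=
  psiWord n (insert n p.1) (insert n p.2)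

lemma setup_of_good {n k : ℕ} (hn : 1 ≤ n) (hk : 1 ≤ k) {p : Finset ℕ × Finset ℕ}
    (hp : p ∈ GoodSet (n-1) (k-1)) :
    Setup n k (insert n p.1) (insert n p.2) ∧ n ∉ p.1 ∧ n ∉ p.2 := by
  unfold GoodSet at hp
  simp only [Finset.mem_filter, Finset.mem_product, Finset.mem_powersetCard] at hp
  obtain ⟨⟨⟨hS, hSc⟩, hT, hTc⟩, hdom⟩ := hp
  have hnS : n ∉ p.1 := by
    intro h
    have := hS h
    simp only [Finset.mem_Icc] at this
    omega
  have hnT : n ∉ p.2 := by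
    intro h
    have := hT h
    simp only [Finset.mem_Icc] at this
    omega
  have hSsub : insert n p.1 ⊆ Finset.Icc 1 n := by
    intro s hs
    rcases Finset.mem_insert.mp hs with rfl | hs'
    · simp only [Finset.mem_Icc]; omega
    · have := hS hs'
      simp only [Finset.mem_Icc] at this ⊢
      omega
  have hTsub : insert n p.2 ⊆ Finset.Icc 1 n := by
    intro s hs
    rcases Finset.mem_insert.mp hs with rfl | hs'
    · simp only [Finset.mem_Icc]; omega
    · have := hT hs'
      simp only [Finset.mem_Icc] at this ⊢
      omega
  refine ⟨⟨hn, hSsub, hTsub, Finset.mem_insert_self _ _, Finset.mem_insert_self _ _,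
    ?_, ?_, ?_⟩, hnS, hnT⟩
  · rw [Finset.card_insert_of_notMem hnS, hSc]; omega
  · rw [Finset.card_insert_of_notMem hnT, hTc]; omega
  · intro c
    rcases Nat.lt_or_ge c n with hc | hc
    · rw [g_insert_of_lt hc, g_insert_of_lt hc]
      exact hdom c (Finset.mem_range.mpr (by omega))
    · rw [g_eq_card hSsub hc, g_eq_card hTsub hc,
        Finset.card_insert_of_notMem hnS, Finset.card_insert_of_notMem hnT, hSc, hTc]

lemma card_eq_good (n k : ℕ) (hn : 1 ≤ n) (hk : 1 ≤ k) :
    ((Finset.univ : Finset (Fin (2 * n) → Bool)).filter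
        (fun f => pathVal f (2 * n) = 0 ∧ IsNonneg f ∧ numPeaks f = k)).card
    = (GoodSet (n-1) (k-1)).card := by
  classical
  apply Finset.card_nbij' Phi Psi
  · -- Phi maps into GoodSet
    intro f hf
    simp only [Finset.mem_coe, Finset.mem_filter, Finset.mem_univ, true_and] at hf
    obtain ⟨h1, h2, h3⟩ := hf
    have ex := exc_of_mem hn h1 h2
    have hkP : (Pset (ext f) (2*n)).card = k := by
      rw [← numPeaks_eq f, h3]
    unfold Phi GoodSet
    simp only [Finset.mem_coe, Finset.mem_filter, Finset.mem_product, Finset.mem_powersetCard]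
    refine ⟨⟨⟨?_, ?_⟩, ?_, ?_⟩, ?_⟩
    · intro s hs
      rw [Finset.mem_erase] at hs
      have := ex.Sfin_range s hs.2
      simp only [Finset.mem_Icc]
      have := hs.1
      omega
    · rw [Finset.card_erase_of_mem ex.n_mem_Sfin, ex.Sfin_card, hkP]
    · intro t ht
      have := ex.Tfin_range t ht
      simp only [Finset.mem_Icc]
      omega
    · rw [ex.Tfin_card]
      have := ex.tele
      omega
    · intro j hj
      rw [Finset.mem_range] at hj
      rw [g_erase_of_lt (by omega)]
      exact ex.dom_phi (by omega)
  · -- Psi maps into the filter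
    intro p hp
    obtain ⟨st, hnS, hnT⟩ := setup_of_good hn hk hp
    simp only [Finset.mem_coe, Finset.mem_filter, Finset.mem_univ, true_and]
    exact ⟨st.psi_endpoint, st.psi_nonneg, st.psi_numPeaks⟩
  · -- Psi ∘ Phi = id
    intro f hf
    simp only [Finset.mem_coe, Finset.mem_filter, Finset.mem_univ, true_and] at hf
    obtain ⟨h1, h2, h3⟩ := hf
    have ex := exc_of_mem hn h1 h2
    funext x
    show psiWord n (insert n ((Sfin (ext f) n).erase n)) (insert n (Tfin (ext f) n)) x = f x
    unfold psiWord
    rw [Finset.insert_erase ex.n_mem_Sfin]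
    rw [ex.psi_phi_word x x.isLt]
    simp [ext, x.isLt]
  · -- Phi ∘ Psi = id
    intro p hp
    obtain ⟨st, hnS, hnT⟩ := setup_of_good hn hk hp
    unfold Phi Psi
    have hS := st.Pset_image
    have hT := st.Vset_image
    rw [Prod.ext_iff]
    constructor
    · show (Sfin (ext (psiWord n (insert n p.1) (insert n p.2))) n).erase n = p.1
      unfold Sfin
      rw [hS, Finset.erase_insert hnS]
    · show Tfin (ext (psiWord n (insert n p.1) (insert n p.2))) n = p.2
      unfold Tfin
      rw [hT, Finset.erase_insert hnT]

lemma filter_empty_of_k_zero (n : ℕ) (hn : 1 ≤ n) :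
    ((Finset.univ : Finset (Fin (2 * n) → Bool)).filter
        (fun f => pathVal f (2 * n) = 0 ∧ IsNonneg f ∧ numPeaks f = 0)).card = 0 := by
  rw [Finset.card_eq_zero, Finset.filter_eq_empty_iff]
  intro f _
  rintro ⟨h1, h2, h3⟩
  have ex := exc_of_mem hn h1 h2
  have := ex.tele
  rw [← numPeaks_eq f] at this
  omega

end Nara

/-- The number of Bernoulli excursions of length `2n` with exactly `k` peaks is
the Narayana number `(1/n)·binomial(n,k)·binomial(n,k-1)` (stated multiplied
through by `n`; the factor `binomial(n,k-1)` is `0` when `k = 0`, by the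
convention that binomial coefficients with negative arguments vanish). -/
theorem card_excursions_with_k_peaks (n k : ℕ) :
    n * ((Finset.univ : Finset (Fin (2 * n) → Bool)).filter
        (fun f => pathVal f (2 * n) = 0 ∧ IsNonneg f ∧ numPeaks f = k)).card
      = n.choose k * (if k = 0 then 0 else n.choose (k - 1)) := by

  rcases Nat.eq_zero_or_pos n with rfl | hn
  · rcases Nat.eq_zero_or_pos k with rfl | hk
    · simp
    · rw [Nat.choose_eq_zero_of_lt (by omega)]
      simp
  rcases Nat.eq_zero_or_pos k with rfl | hk
  · rw [Nara.filter_empty_of_k_zero n hn, if_pos rfl]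
    simp
  rw [Nara.card_eq_good n k hn hk, if_neg (by omega)]
  rcases eq_or_lt_of_le (show 1 ≤ k from hk) with h1 | h2
  · -- k = 1
    rw [← h1]
    simp only [Nat.sub_self]
    rw [Nara.goodSet_card_zero (n-1)]
    rw [Nat.choose_one_right, Nat.choose_zero_right]
  · -- k ≥ 2
    have hG := Nara.goodSet_card (n-1) (k-2)
    have e1 : k - 2 + 1 = k - 1 := by omega
    have e2 : k - 2 + 2 = k := by omega
    rw [e1, e2] at hG
    exact Nara.arith n k _ hn (by omega) hG
end

section
/- The number of Bernoulli meanders of length n (nonnegative paths with ±1 steps starting at 0) having exactly k peaks equals binomial(⌊n/2⌋,k)·binomial(⌈n/2⌉,k). -/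
namespace MeanderAux

/-- integer-argument binomial coefficient, zero for negative upper index -/
def ch (a : ℤ) (k : ℕ) : ℤ := if 0 ≤ a then (a.toNat.choose k : ℤ) else 0

lemma ch_neg {a : ℤ} (h : a < 0) (k : ℕ) : ch a k = 0 := by
  simp [ch, not_le.mpr h]

lemma ch_coe (m k : ℕ) : ch (m : ℤ) k = (m.choose k : ℤ) := by
  simp [ch]

lemma ch_pascal (a : ℤ) (k : ℕ) : ch a (k+1) = ch (a-1) (k+1) + ch (a-1) k := by
  rcases lt_trichotomy a 0 with h | h | h
  · rw [ch_neg h, ch_neg (by omega), ch_neg (by omega)]; ring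
  · subst h
    norm_num [ch]
  · obtain ⟨m, rfl⟩ : ∃ m : ℕ, a = (m : ℤ) + 1 := by
      refine ⟨(a - 1).toNat, by omega⟩
    have h1 : ((m : ℤ) + 1) - 1 = (m : ℤ) := by ring
    rw [h1]
    have h2 : ((m : ℤ) + 1) = ((m + 1 : ℕ) : ℤ) := by push_cast; ring
    rw [h2, ch_coe, ch_coe, ch_coe]
    rw [Nat.choose_succ_succ']
    push_cast; ring

lemma pathVal_zero {n : ℕ} (f : Fin n → Bool) : pathVal f 0 = 0 := by
  simp [pathVal]

lemma pathVal_succ {n : ℕ} (f : Fin n → Bool) {i : ℕ} (hi : i < n) :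
    pathVal f (i+1) = pathVal f i + (if f ⟨i, hi⟩ then 1 else -1) := by
  unfold pathVal
  rw [Finset.sum_range_succ, dif_pos hi]

lemma pathVal_le {n : ℕ} (f : Fin n → Bool) (i : ℕ) : pathVal f i ≤ i := by
  calc pathVal f i ≤ ∑ _j ∈ Finset.range i, (1 : ℤ) := by
        apply Finset.sum_le_sum
        intro j _
        split
        · split <;> omega
        · omega
    _ = i := by simp

lemma pathVal_snoc {n : ℕ} (g : Fin n → Bool) (b : Bool) {i : ℕ} (hi : i ≤ n) :
    pathVal (Fin.snoc g b) i = pathVal g i := by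
  unfold pathVal
  apply Finset.sum_congr rfl
  intro j hj
  simp only [Finset.mem_range] at hj
  have hjn : j < n := lt_of_lt_of_le hj hi
  rw [dif_pos (by omega : j < n + 1), dif_pos hjn]
  have : (⟨j, by omega⟩ : Fin (n+1)) = Fin.castSucc ⟨j, hjn⟩ := rfl
  rw [this, Fin.snoc_castSucc]

lemma pathVal_snoc_top {n : ℕ} (g : Fin n → Bool) (b : Bool) :
    pathVal (Fin.snoc g b) (n+1) = pathVal g n + (if b then 1 else -1) := by
  rw [pathVal_succ (Fin.snoc g b) (Nat.lt_succ_self n)]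
  rw [pathVal_snoc g b (le_refl n)]
  congr 1
  have : (⟨n, Nat.lt_succ_self n⟩ : Fin (n+1)) = Fin.last n := rfl
  rw [this, Fin.snoc_last]

lemma isPeak_snoc_lt {n : ℕ} (g : Fin n → Bool) (b : Bool) {x : ℕ} (hx : x < n) :
    IsPeak (Fin.snoc g b) x ↔ IsPeak g x := by
  unfold IsPeak
  rw [pathVal_snoc g b (by omega : x ≤ n), pathVal_snoc g b (by omega : x - 1 ≤ n),
    pathVal_snoc g b (by omega : x + 1 ≤ n)]
  constructor
  · rintro ⟨h1, _, h3, h4⟩; exact ⟨h1, hx, h3, h4⟩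
  · rintro ⟨h1, _, h3, h4⟩; exact ⟨h1, by omega, h3, h4⟩

lemma isPeak_snoc_last {n : ℕ} (g : Fin (n+1) → Bool) (b : Bool) :
    IsPeak (Fin.snoc g b) (n+1) ↔ (g (Fin.last n) = true ∧ b = false) := by
  unfold IsPeak
  rw [pathVal_snoc g b (by omega : n + 1 ≤ n + 1),
    pathVal_snoc g b (by omega : (n + 1) - 1 ≤ n + 1),
    pathVal_snoc_top g b]
  have hstep : pathVal g (n+1) = pathVal g n + (if g (Fin.last n) then 1 else -1) := by
    rw [pathVal_succ g (Nat.lt_succ_self n)]; rfl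
  have h1 : (n + 1) - 1 = n := by omega
  rw [h1, hstep]
  constructor
  · rintro ⟨-, -, h3, h4⟩
    constructor
    · cases hgl : g (Fin.last n) with
      | true => rfl
      | false => rw [hgl] at h3; simp at h3 <;> omega
    · cases hbv : b with
      | false => rfl
      | true =>
          rw [hbv] at h4
          cases hgl : g (Fin.last n) with
          | true => rw [hgl] at h4; simp at h4 <;> omega
          | false => rw [hgl] at h4; simp at h4 <;> omega
  · rintro ⟨hg, hb⟩
    rw [hg, hb]
    refine ⟨by omega, by omega, by simp, by simp⟩

lemma numPeaks_snoc {n : ℕ} (g : Fin (n+1) → Bool) (b : Bool) :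
    numPeaks (Fin.snoc g b) =
      numPeaks g + (if g (Fin.last n) = true ∧ b = false then 1 else 0) := by
  unfold numPeaks
  rw [Finset.range_add_one, Finset.filter_insert]
  have hcong : (Finset.range (n+1)).filter (fun x => IsPeak (Fin.snoc g b) x)
      = (Finset.range (n+1)).filter (fun x => IsPeak g x) := by
    apply Finset.filter_congr
    intro x hx
    simp only [Finset.mem_range] at hx
    simp [isPeak_snoc_lt g b hx]
  by_cases hp : IsPeak (Fin.snoc g b) (n+1)
  · rw [if_pos hp, Finset.card_insert_of_notMem (by simp), hcong,
      if_pos ((isPeak_snoc_last g b).mp hp)]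
  · rw [if_neg hp, hcong, if_neg (fun hc => hp ((isPeak_snoc_last g b).mpr hc))]
    omega

lemma isNonneg_snoc {n : ℕ} (g : Fin n → Bool) (b : Bool) :
    IsNonneg (Fin.snoc g b) ↔
      IsNonneg g ∧ 0 ≤ pathVal g n + (if b then 1 else -1) := by
  unfold IsNonneg
  constructor
  · intro H
    refine ⟨fun i hi => ?_, ?_⟩
    · simp only [Finset.mem_range] at hi
      have := H i (by simp only [Finset.mem_range]; omega)
      rwa [pathVal_snoc g b (by omega : i ≤ n)] at this
    · have := H (n+1) (by simp only [Finset.mem_range]; omega)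
      rwa [pathVal_snoc_top g b] at this
  · rintro ⟨H, Htop⟩ i hi
    simp only [Finset.mem_range] at hi
    rcases Nat.lt_or_ge i (n+1) with h | h
    · rw [pathVal_snoc g b (by omega : i ≤ n)]
      exact H i (by simp only [Finset.mem_range]; omega)
    · have : i = n + 1 := by omega
      subst this
      rwa [pathVal_snoc_top g b]

/-- refined count: meanders of length `n+1` ending at height `h` with `k` peaks
and last step `b`. -/
def cnt (n : ℕ) (h : ℤ) (k : ℕ) (b : Bool) : ℕ :=
  ((Finset.univ : Finset (Fin (n+1) → Bool)).filter
    (fun f => IsNonneg f ∧ pathVal f (n+1) = h ∧ numPeaks f = k ∧ f (Fin.last n) = b)).card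

lemma cnt_neg {n : ℕ} {h : ℤ} (hh : h < 0) (k : ℕ) (b : Bool) : cnt n h k b = 0 := by
  unfold cnt
  rw [Finset.card_eq_zero, Finset.filter_eq_empty_iff]
  rintro f - ⟨hnn, hval, -, -⟩
  have := hnn (n+1) (by simp only [Finset.mem_range]; omega)
  omega

lemma cnt_high {n : ℕ} {h : ℤ} (hh : (n:ℤ)+1 < h) (k : ℕ) (b : Bool) : cnt n h k b = 0 := by
  unfold cnt
  rw [Finset.card_eq_zero, Finset.filter_eq_empty_iff]
  rintro f - ⟨hnn, hval, -, -⟩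
  have := pathVal_le f (n+1)
  rw [hval] at this
  push_cast at this
  omega

lemma card_snoc_eq {n : ℕ} (P : (Fin (n+1) → Bool) → Prop) [DecidablePred P] :
    ((Finset.univ : Finset (Fin (n+1) → Bool)).filter P).card
      = ((Finset.univ : Finset ((Fin n → Bool) × Bool)).filter
          (fun gb => P (Fin.snoc gb.1 gb.2))).card := by
  apply Finset.card_bij (fun f _ => (Fin.init f, f (Fin.last n)))
  · intro f hf
    simp only [Finset.mem_filter, Finset.mem_univ, true_and] at hf ⊢
    rwa [Fin.snoc_init_self]
  · intro f hf f' hf' hpair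
    have h1 : Fin.init f = Fin.init f' := congrArg Prod.fst hpair
    have h2 : f (Fin.last n) = f' (Fin.last n) := congrArg Prod.snd hpair
    rw [← Fin.snoc_init_self f, ← Fin.snoc_init_self f', h1, h2]
  · intro gb hgb
    simp only [Finset.mem_filter, Finset.mem_univ, true_and] at hgb
    refine ⟨Fin.snoc gb.1 gb.2, by simp only [Finset.mem_filter, Finset.mem_univ, true_and]; exact hgb, ?_⟩
    rw [Fin.init_snoc, Fin.snoc_last]

lemma card_pair_fix {m : ℕ} (R : (Fin m → Bool) → Prop) [DecidablePred R] (b₀ : Bool) :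
    ((Finset.univ : Finset ((Fin m → Bool) × Bool)).filter
        (fun gb => R gb.1 ∧ gb.2 = b₀)).card
      = ((Finset.univ : Finset (Fin m → Bool)).filter R).card := by
  apply Finset.card_bij (fun gb _ => gb.1)
  · intro gb hgb
    simp only [Finset.mem_filter, Finset.mem_univ, true_and] at hgb ⊢
    exact hgb.1
  · intro gb hgb gb' hgb' hfst
    simp only [Finset.mem_filter, Finset.mem_univ, true_and] at hgb hgb'
    exact Prod.ext hfst (hgb.2.trans hgb'.2.symm)
  · intro g hg
    simp only [Finset.mem_filter, Finset.mem_univ, true_and] at hg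
    exact ⟨(g, b₀), by simp [hg], rfl⟩


lemma card_split_last {m : ℕ} (R : (Fin (m+1) → Bool) → Prop) [DecidablePred R] :
    ((Finset.univ : Finset (Fin (m+1) → Bool)).filter R).card
      = ((Finset.univ : Finset (Fin (m+1) → Bool)).filter
          (fun g => R g ∧ g (Fin.last m) = true)).card
        + ((Finset.univ : Finset (Fin (m+1) → Bool)).filter
          (fun g => R g ∧ g (Fin.last m) = false)).card := by
  rw [← Finset.filter_filter, ← Finset.filter_filter]
  have h2 : (Finset.filter (fun g : Fin (m+1) → Bool => g (Fin.last m) = false)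
      (Finset.filter R Finset.univ))
      = Finset.filter (fun g => ¬ g (Fin.last m) = true) (Finset.filter R Finset.univ) := by
    apply Finset.filter_congr; intro g _; simp [Bool.not_eq_true]
  rw [h2, Finset.card_filter_add_card_filter_not]

lemma cnt_succ_true (n : ℕ) (h : ℤ) (k : ℕ) :
    cnt (n+1) h k true = cnt n (h-1) k true + cnt n (h-1) k false := by
  unfold cnt
  rw [card_snoc_eq]
  have hiff : ∀ gb : (Fin (n+1) → Bool) × Bool,
      (IsNonneg (Fin.snoc gb.1 gb.2) ∧ pathVal (Fin.snoc gb.1 gb.2) (n+1+1) = h ∧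
        numPeaks (Fin.snoc gb.1 gb.2) = k ∧ (Fin.snoc gb.1 gb.2 : Fin (n+1+1) → Bool) (Fin.last (n+1)) = true)
      ↔ ((IsNonneg gb.1 ∧ pathVal gb.1 (n+1) = h - 1 ∧ numPeaks gb.1 = k) ∧ gb.2 = true) := by
    rintro ⟨g, b⟩
    simp only [Fin.snoc_last, isNonneg_snoc, pathVal_snoc_top, numPeaks_snoc]
    constructor
    · rintro ⟨⟨hnn, _⟩, hval, hpk, rfl⟩
      simp only [if_true] at hval hpk
      refine ⟨⟨hnn, by omega, ?_⟩, rfl⟩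
      · simpa using hpk
    · rintro ⟨⟨hnn, hval, hpk⟩, rfl⟩
      have h0 : (0:ℤ) ≤ pathVal g (n+1) := hnn (n+1) (by simp)
      refine ⟨⟨hnn, by simp; omega⟩, by simp; omega, by simp [hpk], rfl⟩
  rw [Finset.filter_congr (fun gb _ => hiff gb)]
  rw [card_pair_fix (fun g : Fin (n+1) → Bool =>
    IsNonneg g ∧ pathVal g (n+1) = h - 1 ∧ numPeaks g = k) true]
  rw [card_split_last (fun g : Fin (n+1) → Bool =>
    IsNonneg g ∧ pathVal g (n+1) = h - 1 ∧ numPeaks g = k)]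
  congr 1
  · congr 1; apply Finset.filter_congr; intro g _; tauto
  · congr 1; apply Finset.filter_congr; intro g _; tauto

lemma cnt_succ_false (n : ℕ) (h : ℤ) (hh : 0 ≤ h) (k : ℕ) :
    cnt (n+1) h k false
      = (if k = 0 then 0 else cnt n (h+1) (k-1) true) + cnt n (h+1) k false := by
  unfold cnt
  rw [card_snoc_eq]
  have hiff : ∀ gb : (Fin (n+1) → Bool) × Bool,
      (IsNonneg (Fin.snoc gb.1 gb.2) ∧ pathVal (Fin.snoc gb.1 gb.2) (n+1+1) = h ∧
        numPeaks (Fin.snoc gb.1 gb.2) = k ∧ (Fin.snoc gb.1 gb.2 : Fin (n+1+1) → Bool) (Fin.last (n+1)) = false)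
      ↔ ((IsNonneg gb.1 ∧ pathVal gb.1 (n+1) = h + 1 ∧
          numPeaks gb.1 + (if gb.1 (Fin.last n) = true then 1 else 0) = k) ∧ gb.2 = false) := by
    rintro ⟨g, b⟩
    simp only [Fin.snoc_last, isNonneg_snoc, pathVal_snoc_top, numPeaks_snoc]
    constructor
    · rintro ⟨⟨hnn, _⟩, hval, hpk, rfl⟩
      simp only [Bool.false_eq_true, if_false] at hval hpk
      refine ⟨⟨hnn, by omega, ?_⟩, rfl⟩
      by_cases hg : g (Fin.last n) = true
      · simp [hg] at hpk ⊢; omega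
      · simp [hg] at hpk ⊢; omega
    · rintro ⟨⟨hnn, hval, hpk⟩, rfl⟩
      refine ⟨⟨hnn, by simp; omega⟩, by simp; omega, ?_, rfl⟩
      by_cases hg : g (Fin.last n) = true
      · simp [hg] at hpk ⊢; omega
      · simp [hg] at hpk ⊢; omega
  rw [Finset.filter_congr (fun gb _ => hiff gb)]
  rw [card_pair_fix (fun g : Fin (n+1) → Bool =>
    IsNonneg g ∧ pathVal g (n+1) = h + 1 ∧
      numPeaks g + (if g (Fin.last n) = true then 1 else 0) = k) false]
  rw [card_split_last (fun g : Fin (n+1) → Bool =>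
    IsNonneg g ∧ pathVal g (n+1) = h + 1 ∧
      numPeaks g + (if g (Fin.last n) = true then 1 else 0) = k)]
  congr 1
  · by_cases hk : k = 0
    · rw [if_pos hk]
      rw [Finset.card_eq_zero, Finset.filter_eq_empty_iff]
      rintro g - ⟨⟨-, -, hpk⟩, hlast⟩
      rw [if_pos hlast] at hpk
      omega
    · rw [if_neg hk]
      congr 1
      apply Finset.filter_congr
      intro g _
      constructor
      · rintro ⟨⟨h1, h2, h3⟩, h4⟩
        rw [if_pos h4] at h3
        exact ⟨h1, h2, by omega, h4⟩
      · rintro ⟨h1, h2, h3, h4⟩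
        exact ⟨⟨h1, h2, by rw [if_pos h4]; omega⟩, h4⟩
  · congr 1
    apply Finset.filter_congr
    intro g _
    constructor
    · rintro ⟨⟨h1, h2, h3⟩, h4⟩
      rw [h4] at h3
      simp only [Bool.false_eq_true, if_false] at h3
      exact ⟨h1, h2, by omega, h4⟩
    · rintro ⟨h1, h2, h3, h4⟩
      refine ⟨⟨h1, h2, ?_⟩, h4⟩
      rw [h4]
      simp only [Bool.false_eq_true, if_false]
      omega

def FU (u d k : ℕ) : ℤ := ch ((u:ℤ)-1) k * ch d k - ch u k * ch ((d:ℤ)-1) k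

def FD (u d k : ℕ) : ℤ :=
  if k = 0 then 0 else ch ((u:ℤ)-1) (k-1) * ch d k - ch u (k-1) * ch ((d:ℤ)-1) k

lemma ch_zero_right {a : ℤ} (ha : 0 ≤ a) : ch a 0 = 1 := by
  simp [ch, ha]

lemma numPeaks_one (f : Fin 1 → Bool) : numPeaks f = 0 := by
  unfold numPeaks
  rw [Finset.card_eq_zero, Finset.filter_eq_empty_iff]
  intro x hx
  simp only [Finset.mem_range] at hx
  rintro ⟨h0, h1, -⟩
  omega

lemma cnt_zero (h : ℤ) (k : ℕ) (b : Bool) :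
    cnt 0 h k b = if h = 1 ∧ k = 0 ∧ b = true then 1 else 0 := by
  unfold cnt
  have hval : ∀ f : Fin 1 → Bool, pathVal f 1 = if f 0 then 1 else -1 := by
    intro f
    rw [pathVal_succ f (by omega : 0 < 1), pathVal_zero]
    simp
  by_cases hc : h = 1 ∧ k = 0 ∧ b = true
  · obtain ⟨rfl, rfl, rfl⟩ := hc
    rw [if_pos ⟨rfl, rfl, rfl⟩, Finset.card_eq_one]
    refine ⟨fun _ => true, ?_⟩
    ext f
    simp only [Finset.mem_filter, Finset.mem_univ, true_and, Finset.mem_singleton]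
    constructor
    · rintro ⟨-, hv, -, hl⟩
      funext i
      have hi : i = 0 := Fin.fin_one_eq_zero i
      rw [hi]; exact hl
    · rintro rfl
      refine ⟨?_, ?_, numPeaks_one _, rfl⟩
      · intro i hi
        simp only [Finset.mem_range] at hi
        interval_cases i
        · rw [pathVal_zero]
        · rw [hval]; simp
      · rw [hval]; simp
  · rw [if_neg hc, Finset.card_eq_zero, Finset.filter_eq_empty_iff]
    rintro f - ⟨hnn, hv, hk, hl⟩
    apply hc
    have h1 : pathVal f 1 = if f 0 then 1 else -1 := hval f
    have h0 : (0:ℤ) ≤ pathVal f 1 := hnn 1 (by simp)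
    have hf : f 0 = true := by
      cases hf0 : f 0 with
      | true => rfl
      | false =>
          rw [hf0] at h1; simp at h1
          rw [h1] at h0; norm_num at h0
    rw [hf] at h1; simp at h1
    refine ⟨by rw [← hv]; exact h1, by rw [← hk]; exact numPeaks_one f,
      by rw [← hl]; exact hf.symm ▸ rfl⟩

lemma FD_right_zero (u k : ℕ) : FD u 0 k = 0 := by
  unfold FD
  cases k with
  | zero => simp
  | succ j =>
      rw [if_neg (by omega)]
      have h1 : ch ((0:ℕ):ℤ) (j+1) = 0 := by simp [ch]
      have h2 : ch (((0:ℕ):ℤ)-1) (j+1) = 0 := by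
        apply ch_neg; norm_num
      rw [h1, h2]; ring

lemma FU_step (u d k : ℕ) (hu : 1 ≤ u) : FU u d k + FD u d k = FU (u+1) d k := by
  unfold FU FD
  cases k with
  | zero =>
      have e1 : ch ((u:ℤ)-1) 0 = 1 := ch_zero_right (by omega)
      have e2 : ch ((u:ℤ)) 0 = 1 := ch_zero_right (by omega)
      have e3 : ch (((u:ℕ)+1:ℕ):ℤ) 0 = 1 := ch_zero_right (by positivity)
      push_cast at e3 ⊢
      have e4 : (u:ℤ) + 1 - 1 = (u:ℤ) := by ring
      rw [e4, e1, e2, e3]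
      ring
  | succ j =>
      rw [if_neg (by omega)]
      have hp1 : ch ((u:ℤ)) (j+1) = ch ((u:ℤ)-1) (j+1) + ch ((u:ℤ)-1) j :=
        ch_pascal (u:ℤ) j
      have hp2 : ch ((u:ℤ)+1) (j+1) = ch (u:ℤ) (j+1) + ch (u:ℤ) j := by
        have h := ch_pascal ((u:ℤ)+1) j
        rw [show (u:ℤ)+1-1 = (u:ℤ) from by ring] at h
        exact h
      push_cast
      rw [show (u:ℤ)+1-1 = (u:ℤ) from by ring, hp2, hp1]
      try simp only [Nat.add_sub_cancel]
      ring

lemma FD_step (u d k : ℕ) : FD u (d+1) k = FD u d k + (if k = 0 then 0 else FU u d (k-1)) := by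
  unfold FU FD
  cases k with
  | zero => simp
  | succ j =>
      rw [if_neg (by omega), if_neg (by omega), if_neg (by omega)]
      simp only [Nat.add_sub_cancel]
      have hp1 : ch ((d:ℤ)+1) (j+1) = ch (d:ℤ) (j+1) + ch (d:ℤ) j := by
        have h := ch_pascal ((d:ℤ)+1) j
        rw [show (d:ℤ)+1-1 = (d:ℤ) from by ring] at h
        exact h
      have hp2 : ch ((d:ℤ)) (j+1) = ch ((d:ℤ)-1) (j+1) + ch ((d:ℤ)-1) j :=
        ch_pascal (d:ℤ) j
      push_cast
      rw [show (d:ℤ)+1-1 = (d:ℤ) from by ring, hp1, hp2]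
      ring

lemma main_count (n : ℕ) : ∀ u d k : ℕ, u + d = n + 1 → d ≤ u →
    (cnt n ((u:ℤ) - d) k true : ℤ) = FU u d k ∧
      (cnt n ((u:ℤ) - d) k false : ℤ) = FD u d k := by
  induction n with
  | zero =>
      intro u d k hud hdu
      have hu : u = 1 := by omega
      have hd : d = 0 := by omega
      subst hu; subst hd
      rw [cnt_zero, cnt_zero]
      constructor
      · cases k with
        | zero =>
            norm_num [FU, ch]
        | succ j =>
            rw [if_neg (by simp)]
            unfold FU
            have h1 : ch (((1:ℕ):ℤ)-1) (j+1) = 0 := by norm_num [ch]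
            have h2 : ch (((0:ℕ):ℤ)-1) (j+1) = 0 := ch_neg (by norm_num) _
            rw [h1, h2]
            ring
      · rw [if_neg (by simp), FD_right_zero]
        norm_num
  | succ n ih =>
      intro u d k hud hdu
      constructor
      · -- last step up
        rw [cnt_succ_true]
        obtain ⟨v, rfl⟩ : ∃ v, u = v + 1 := ⟨u - 1, by omega⟩
        by_cases hvd : d = v + 1
        · subst hvd
          rw [show ((v+1:ℕ):ℤ) - ((v+1:ℕ):ℤ) - 1 = -1 from by push_cast; ring]
          rw [cnt_neg (by norm_num), cnt_neg (by norm_num)]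
          unfold FU
          push_cast
          ring
        · have hdv : d ≤ v := by omega
          have IH := ih v d k (by omega) hdv
          rw [show ((v+1:ℕ):ℤ) - (d:ℤ) - 1 = (v:ℤ) - d from by push_cast; ring]
          push_cast
          rw [IH.1, IH.2]
          exact FU_step v d k (by omega)
      · -- last step down
        rw [cnt_succ_false n _ (by omega) k]
        cases d with
        | zero =>
            have hun : (n:ℤ) + 1 < (u:ℤ) - ((0:ℕ):ℤ) + 1 := by
              have : u = n + 2 := by omega
              subst this; push_cast; omega
            rw [cnt_high hun, cnt_high hun, FD_right_zero]
            simp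
        | succ e =>
            have IH := ih u e k (by omega) (by omega)
            rw [show (u:ℤ) - ((e+1:ℕ):ℤ) + 1 = (u:ℤ) - (e:ℤ) from by push_cast; ring]
            rw [FD_step u e k]
            cases k with
            | zero =>
                rw [if_pos rfl, if_pos rfl]
                push_cast
                rw [IH.2]
                ring
            | succ j =>
                have IH2 := ih u e j (by omega) (by omega)
                rw [if_neg (by omega), if_neg (by omega)]
                push_cast
                rw [IH.2]
                try simp only [Nat.add_sub_cancel]
                rw [IH2.1]
                ring

lemma pathVal_count {n : ℕ} (f : Fin n → Bool) :
    pathVal f n = 2 * ((Finset.univ.filter (fun i => f i = true)).card : ℤ) - n := by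
  have h1 : pathVal f n = ∑ i : Fin n, (if f i = true then (1:ℤ) else -1) := by
    rw [pathVal, ← Fin.sum_univ_eq_sum_range
      (fun j => if h : j < n then (if f ⟨j, h⟩ then (1:ℤ) else -1) else 0) n]
    apply Finset.sum_congr rfl
    intro i _
    rw [dif_pos i.isLt]
  rw [h1]
  have h2 : ∀ i : Fin n, (if f i = true then (1:ℤ) else -1)
      = 2 * (if f i = true then (1:ℤ) else 0) - 1 := by
    intro i; by_cases hf : f i = true <;> simp [hf]
  rw [Finset.sum_congr rfl (fun i _ => h2 i)]
  rw [Finset.sum_sub_distrib, ← Finset.mul_sum, Finset.sum_boole, Finset.sum_const]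
  simp [mul_comm]

lemma trues_iff {m : ℕ} (g : Fin (m+1) → Bool) (u : ℕ) :
    (Finset.univ.filter (fun i => g i = true)).card = u
      ↔ pathVal g (m+1) = 2*(u:ℤ) - ((m:ℤ)+1) := by
  rw [pathVal_count]
  push_cast
  constructor
  · rintro rfl; ring
  · intro h; omega

lemma FUFD_tel (u d k : ℕ) (hu : 1 ≤ u) :
    FU u d k + FD u d k = ch u k * ch d k - ch ((u:ℤ)+1) k * ch ((d:ℤ)-1) k := by
  unfold FU FD
  cases k with
  | zero =>
      have e1 : ch ((u:ℤ)-1) 0 = 1 := ch_zero_right (by omega)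
      have e2 : ch ((u:ℤ)) 0 = 1 := ch_zero_right (by omega)
      have e3 : ch ((u:ℤ)+1) 0 = 1 := ch_zero_right (by omega)
      rw [e1, e2, e3]
      simp
  | succ j =>
      rw [if_neg (by omega)]
      try simp only [Nat.add_sub_cancel]
      have hp1 : ch ((u:ℤ)) (j+1) = ch ((u:ℤ)-1) (j+1) + ch ((u:ℤ)-1) j :=
        ch_pascal (u:ℤ) j
      have hp2 : ch ((u:ℤ)+1) (j+1) = ch (u:ℤ) (j+1) + ch (u:ℤ) j := by
        have h := ch_pascal ((u:ℤ)+1) j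
        rw [show (u:ℤ)+1-1 = (u:ℤ) from by ring] at h
        exact h
      rw [hp2, hp1]
      ring

theorem meanders_count (n k : ℕ) :
    ((Finset.univ : Finset (Fin n → Bool)).filter
        (fun f => IsNonneg f ∧ numPeaks f = k)).card
      = (n / 2).choose k * ((n + 1) / 2).choose k := by
  cases n with
  | zero =>
      have hmem : ∀ f : Fin 0 → Bool, IsNonneg f ∧ numPeaks f = 0 := by
        intro f
        constructor
        · intro i hi
          simp only [Finset.mem_range] at hi
          interval_cases i
          rw [pathVal_zero]
        · simp [numPeaks]
      cases k with
      | zero =>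
          rw [Finset.filter_true_of_mem (fun f _ => hmem f), Finset.card_univ]
          simp
      | succ j =>
          have hz : (Finset.filter (fun f : Fin 0 → Bool => IsNonneg f ∧ numPeaks f = j + 1)
              Finset.univ) = ∅ := by
            rw [Finset.filter_eq_empty_iff]
            rintro f -
            rintro ⟨-, hpk⟩
            have := (hmem f).2
            omega
          rw [hz, Finset.card_empty]
          norm_num
  | succ m =>
      -- fiberwise decomposition by number of up-steps
      have hfib : ((Finset.univ : Finset (Fin (m+1) → Bool)).filter
          (fun f => IsNonneg f ∧ numPeaks f = k)).card
          = ∑ u ∈ Finset.range (m+2),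
              (cnt m (2*(u:ℤ) - ((m:ℤ)+1)) k true + cnt m (2*(u:ℤ) - ((m:ℤ)+1)) k false) := by
        rw [Finset.card_eq_sum_card_fiberwise
          (f := fun g : Fin (m+1) → Bool => (Finset.univ.filter (fun i => g i = true)).card)
          (t := Finset.range (m+2))
          (by
            intro g _
            simp only [Finset.mem_range]
            have := Finset.card_filter_le (Finset.univ : Finset (Fin (m+1)))
              (fun i => g i = true)
            simp only [Finset.card_univ, Fintype.card_fin] at this
            exact Finset.mem_coe.mpr (Finset.mem_range.mpr (Nat.lt_succ_of_le this)))]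
        apply Finset.sum_congr rfl
        intro u _
        rw [Finset.filter_filter]
        rw [card_split_last (fun g : Fin (m+1) → Bool =>
          (IsNonneg g ∧ numPeaks g = k) ∧ (Finset.univ.filter (fun i => g i = true)).card = u)]
        unfold cnt
        congr 1
        · congr 1
          apply Finset.filter_congr
          intro g _
          rw [trues_iff g u]
          tauto
        · congr 1
          apply Finset.filter_congr
          intro g _
          rw [trues_iff g u]
          tauto
      have hcast : (((Finset.univ : Finset (Fin (m+1) → Bool)).filter
          (fun f => IsNonneg f ∧ numPeaks f = k)).card : ℤ)
          = ∑ u ∈ Finset.range (m+2),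
              ((cnt m (2*(u:ℤ) - ((m:ℤ)+1)) k true : ℤ)
                + (cnt m (2*(u:ℤ) - ((m:ℤ)+1)) k false : ℤ)) := by
        rw [hfib]
        push_cast
        rfl
      set c0 : ℕ := (m+2)/2 with hc0
      have hc0le : c0 ≤ m + 2 := by omega
      have hG : (∑ u ∈ Finset.range (m+2),
            ((cnt m (2*(u:ℤ) - ((m:ℤ)+1)) k true : ℤ)
              + (cnt m (2*(u:ℤ) - ((m:ℤ)+1)) k false : ℤ)))
          = ch (c0:ℤ) k * ch ((m:ℤ)+1-c0) k := by
        rw [Finset.range_eq_Ico,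
          ← Finset.sum_Ico_consecutive _ (Nat.zero_le c0) hc0le]
        have hzero : (∑ u ∈ Finset.Ico 0 c0,
            ((cnt m (2*(u:ℤ) - ((m:ℤ)+1)) k true : ℤ)
              + (cnt m (2*(u:ℤ) - ((m:ℤ)+1)) k false : ℤ))) = 0 := by
          apply Finset.sum_eq_zero
          intro u hu
          simp only [Finset.mem_Ico] at hu
          have hneg : 2*(u:ℤ) - ((m:ℤ)+1) < 0 := by omega
          rw [cnt_neg hneg, cnt_neg hneg]
          norm_num
        rw [hzero, zero_add]
        have hterm : ∀ u ∈ Finset.Ico c0 (m+2),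
            ((cnt m (2*(u:ℤ) - ((m:ℤ)+1)) k true : ℤ)
              + (cnt m (2*(u:ℤ) - ((m:ℤ)+1)) k false : ℤ))
            = (ch (u:ℤ) k * ch ((m:ℤ)+1-u) k
                - ch ((u:ℤ)+1) k * ch ((m:ℤ)+1-(u+1)) k) := by
          intro u hu
          simp only [Finset.mem_Ico] at hu
          have hu1 : 1 ≤ u := by omega
          have hule : u ≤ m + 1 := by omega
          have h2u : m + 1 ≤ 2 * u := by omega
          have hmc := main_count m u (m+1-u) k (by omega) (by omega)
          have hht : (u:ℤ) - ((m+1-u:ℕ):ℤ) = 2*(u:ℤ) - ((m:ℤ)+1) := by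
            push_cast [Nat.cast_sub (by omega : u ≤ m + 1)]
            ring
          rw [hht] at hmc
          rw [hmc.1, hmc.2, FUFD_tel u (m+1-u) k hu1]
          have hd : ((m+1-u:ℕ):ℤ) = (m:ℤ)+1-u := by
            push_cast [Nat.cast_sub (by omega : u ≤ m + 1)]
            ring
          rw [hd]
          have : (m:ℤ)+1-u-1 = (m:ℤ)+1-((u:ℤ)+1) := by ring
          rw [this]
        rw [Finset.sum_congr rfl hterm]
        have hre : (∑ u ∈ Finset.Ico c0 (m+2),
            (ch (u:ℤ) k * ch ((m:ℤ)+1-u) k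
              - ch ((u:ℤ)+1) k * ch ((m:ℤ)+1-(u+1)) k))
            = ∑ j ∈ Finset.range (m+2-c0),
              ((fun v : ℕ => ch (v:ℤ) k * ch ((m:ℤ)+1-v) k) (c0+j)
                - (fun v : ℕ => ch (v:ℤ) k * ch ((m:ℤ)+1-v) k) (c0+(j+1))) := by
          rw [Finset.sum_Ico_eq_sum_range]
          apply Finset.sum_congr rfl
          intro j _
          push_cast
          ring_nf
        rw [hre, Finset.sum_range_sub' (fun j =>
          (fun v : ℕ => ch (v:ℤ) k * ch ((m:ℤ)+1-v) k) (c0+j))]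
        simp only [Nat.add_zero]
        have h1 : c0 + (m + 2 - c0) = m + 2 := by omega
        rw [h1]
        have h2 : (m:ℤ) + 1 - ((m+2:ℕ):ℤ) = -1 := by push_cast; ring
        rw [h2, ch_neg (show (-1:ℤ) < 0 from by norm_num), mul_zero, sub_zero]
      have hfinal : (((Finset.univ : Finset (Fin (m+1) → Bool)).filter
          (fun f => IsNonneg f ∧ numPeaks f = k)).card : ℤ)
          = ((c0.choose k : ℤ) * ((m+1-c0).choose k : ℤ)) := by
        rw [hcast, hG]
        rw [show ((m:ℤ)+1-c0) = ((m+1-c0:ℕ):ℤ) from by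
          push_cast [Nat.cast_sub (by omega : c0 ≤ m + 1)]; ring]
        rw [ch_coe, ch_coe]
      have h1 : c0 = (m+2)/2 := hc0
      have h2 : m+1-c0 = (m+1)/2 := by omega
      have := hfinal
      rw [h2, h1] at this
      have hfin2 : (((Finset.univ : Finset (Fin (m+1) → Bool)).filter
          (fun f => IsNonneg f ∧ numPeaks f = k)).card : ℤ)
          = (((m+1)/2).choose k * ((m+1+1)/2).choose k : ℤ) := by
        rw [this]
        push_cast
        ring
      exact_mod_cast hfin2

end MeanderAux

/-- The number of Bernoulli meanders of length `n` with exactly `k` peaks is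
`binomial(⌊n/2⌋,k) · binomial(⌈n/2⌉,k)`. -/
theorem card_meanders_with_k_peaks (n k : ℕ) :
    ((Finset.univ : Finset (Fin n → Bool)).filter
        (fun f => IsNonneg f ∧ numPeaks f = k)).card
      = (n / 2).choose k * ((n + 1) / 2).choose k := by
  exact MeanderAux.meanders_count n k
end

section
/- For x≥1, y≥1, l≥0, j≥0, the number of nonnegative Bernoulli paths of length l from x to y with exactly j peaks, starting with a down step and ending with an up step, equals G(l,j,j,x,y) - G(l,j,j,-x,y), where G(l,j1,j2,x,y)=binomial((l+y-x)/2-1, j1)·binomial((l-y+x)/2-1, j2). -/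
/-- Integer binomial coefficient with the convention that it vanishes unless
`0 ≤ p ≤ m`. -/
def ichoose (m p : ℤ) : ℤ :=
  if 0 ≤ m ∧ 0 ≤ p then ((m.toNat).choose p.toNat : ℤ) else 0

/-- `hchoose num p = binomial (num/2 - 1) p`, with the convention that it
vanishes when `num` is odd (non-integer upper argument) or when the arguments
are out of range. -/
def hchoose (num p : ℤ) : ℤ :=
  if 2 ∣ num then ichoose (num / 2 - 1) p else 0

/-- `G(l,j₁,j₂,x,y) = binomial((l+y-x)/2 - 1, j₁) · binomial((l-y+x)/2 - 1, j₂)`. -/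
def G (l j1 j2 x y : ℤ) : ℤ := hchoose (l + y - x) j1 * hchoose (l - y + x) j2

/-- The path started at `x` stays nonnegative on `[0, n]`. -/
def IsNonnegFrom {n : ℕ} (x : ℤ) (f : Fin n → Bool) : Prop :=
  ∀ i ∈ Finset.range (n + 1), 0 ≤ x + pathVal f i

instance {n : ℕ} (x : ℤ) (f : Fin n → Bool) : Decidable (IsNonnegFrom x f) := by
  unfold IsNonnegFrom; infer_instance

/-! ### path lemmas -/

def eps (b : Bool) : ℤ := if b then 1 else -1

lemma pathVal_zero {n : ℕ} (f : Fin n → Bool) : pathVal f 0 = 0 := by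
  simp [pathVal]

lemma pathVal_cons {n : ℕ} (b : Bool) (g : Fin n → Bool) (i : ℕ) :
    pathVal (Fin.cons b g) (i + 1) = eps b + pathVal g i := by
  unfold pathVal
  rw [Finset.sum_range_succ']
  have h0 : (if h : 0 < n + 1 then (if Fin.cons (α := fun _ => Bool) b g (⟨0, h⟩ : Fin (n+1)) then (1:ℤ) else -1) else 0)
      = eps b := by simp [eps]
  have hsum : ∀ k ∈ Finset.range i,
      (if h : k + 1 < n + 1 then (if Fin.cons (α := fun _ => Bool) b g (⟨k + 1, h⟩ : Fin (n+1)) then (1:ℤ) else -1) else 0)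
      = (if h : k < n then (if g (⟨k, h⟩ : Fin n) then (1:ℤ) else -1) else 0) := by
    intro k _
    by_cases hk : k < n
    · rw [dif_pos hk, dif_pos (by omega : k + 1 < n + 1)]
      have : (Fin.cons (α := fun _ => Bool) b g ⟨k + 1, by omega⟩ : Bool) = g ⟨k, hk⟩ := by
        exact Fin.cons_succ (α := fun _ => Bool) b g ⟨k, hk⟩
      rw [this]
    · rw [dif_neg hk, dif_neg (by omega)]
  rw [Finset.sum_congr rfl hsum, h0]
  ring

lemma pathVal_one_cons {n : ℕ} (b : Bool) (g : Fin n → Bool) :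
    pathVal (Fin.cons b g) 1 = eps b := by
  have := pathVal_cons b g 0
  rwa [pathVal_zero, add_zero] at this

lemma nonneg_cons {n : ℕ} (x : ℤ) (b : Bool) (g : Fin n → Bool) :
    IsNonnegFrom x (Fin.cons b g) ↔ 0 ≤ x ∧ IsNonnegFrom (x + eps b) g := by
  constructor
  · intro h
    constructor
    · have := h 0 (by simp)
      rwa [pathVal_zero, add_zero] at this
    · intro i hi
      simp only [Finset.mem_range] at hi
      have := h (i + 1) (by simp only [Finset.mem_range]; omega)
      rw [pathVal_cons] at this
      linarith
  · rintro ⟨h0, h⟩ i hi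
    simp only [Finset.mem_range] at hi
    match i with
    | 0 => rwa [pathVal_zero, add_zero]
    | (i + 1) =>
      rw [pathVal_cons]
      have := h i (by simp only [Finset.mem_range]; omega)
      linarith

lemma card_cons_split {n : ℕ} (p : (Fin (n + 1) → Bool) → Prop) [DecidablePred p] :
    (Finset.univ.filter p).card
      = (Finset.univ.filter fun g : Fin n → Bool => p (Fin.cons false g)).card
      + (Finset.univ.filter fun g : Fin n → Bool => p (Fin.cons true g)).card := by
  rw [Finset.card_filter, Finset.card_filter, Finset.card_filter]
  rw [← Equiv.sum_comp (Fin.consEquiv fun _ => Bool) (fun f => if p f then 1 else 0)]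
  rw [Fintype.sum_prod_type, Fintype.sum_bool]
  simp only [Fin.consEquiv, Equiv.coe_fn_mk]
  exact add_comm _ _

lemma isPeak_cons_succ_succ {n : ℕ} (b : Bool) (g : Fin n → Bool) (k : ℕ) :
    IsPeak (Fin.cons b g) (k + 2) ↔ IsPeak g (k + 1) := by
  unfold IsPeak
  have e1 : pathVal (Fin.cons b g) (k + 2) = eps b + pathVal g (k + 1) := pathVal_cons b g (k + 1)
  have e2 : pathVal (Fin.cons b g) (k + 1) = eps b + pathVal g k := pathVal_cons b g k
  have e3 : pathVal (Fin.cons b g) (k + 3) = eps b + pathVal g (k + 2) := pathVal_cons b g (k + 2)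
  have h1 : k + 2 - 1 = k + 1 := by omega
  have h2 : k + 1 - 1 = k := by omega
  rw [h1, h2, e1, e2]
  rw [show k + 2 + 1 = k + 3 from rfl, e3]
  constructor
  · rintro ⟨-, hv, h3, h4⟩
    exact ⟨by omega, by omega, by linarith, by linarith⟩
  · rintro ⟨-, hv, h3, h4⟩
    exact ⟨by omega, by omega, by linarith, by linarith⟩

lemma isPeak_cons_one {n : ℕ} (b : Bool) (g : Fin n → Bool) (hn : 0 < n) :
    IsPeak (Fin.cons b g) 1 ↔ (b = true ∧ pathVal g 1 = -1) := by
  unfold IsPeak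
  have e1 : pathVal (Fin.cons b g) 1 = eps b := by
    have := pathVal_cons b g 0; rwa [pathVal_zero, add_zero] at this
  have e2 : pathVal (Fin.cons b g) 2 = eps b + pathVal g 1 := pathVal_cons b g 1
  rw [show (1 : ℕ) - 1 = 0 from rfl, pathVal_zero, e1, show (1 : ℕ) + 1 = 2 from rfl, e2]
  constructor
  · rintro ⟨-, -, h1, h2⟩
    cases b
    · exfalso; simp [eps] at h1
    · exact ⟨rfl, by linarith⟩
  · rintro ⟨hb, hv⟩
    subst hb
    refine ⟨one_pos, by omega, by simp [eps], ?_⟩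
    rw [hv]; simp [eps]

lemma numPeaks_cons {n : ℕ} (b : Bool) (g : Fin n → Bool) :
    numPeaks (Fin.cons b g)
      = numPeaks g + (if b = true ∧ pathVal g 1 = -1 ∧ 0 < n then 1 else 0) := by
  unfold numPeaks
  rw [Finset.card_filter, Finset.card_filter, Finset.sum_range_succ']
  have h0 : (if IsPeak (Fin.cons b g) 0 then 1 else 0) = 0 := by
    simp [IsPeak]
  rw [h0, add_zero]
  have hterm : ∀ k ∈ Finset.range n,
      (if IsPeak (Fin.cons b g) (k + 1) then 1 else 0)
      = ((if IsPeak g k then 1 else 0)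
          + (if k = 0 ∧ b = true ∧ pathVal g 1 = -1 then 1 else 0)) := by
    intro k hk
    simp only [Finset.mem_range] at hk
    match k with
    | 0 =>
      have hg0 : ¬ IsPeak g 0 := by simp [IsPeak]
      simp only [isPeak_cons_one b g hk, hg0, if_false, true_and]
      by_cases hc : b = true ∧ pathVal g 1 = -1
      · simp [hc]
      · simp [hc]
    | (k + 1) =>
      simp only [isPeak_cons_succ_succ b g k]
      simp
  rw [Finset.sum_congr rfl hterm, Finset.sum_add_distrib]
  congr 1
  by_cases hc : b = true ∧ pathVal g 1 = -1
  · simp only [hc.1, hc.2, and_true, true_and]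
    have hs : (∑ k ∈ Finset.range n, if k = 0 then 1 else 0) = if 0 < n then 1 else 0 := by
      cases n with
      | zero => simp
      | succ m => rw [Finset.sum_range_succ']; simp
    rw [hs]
  · have hz : ∀ k ∈ Finset.range n,
        (if k = 0 ∧ b = true ∧ pathVal g 1 = -1 then 1 else 0) = 0 := by
      intro k _; rw [if_neg (by tauto)]
    rw [Finset.sum_congr rfl hz, Finset.sum_const_zero, if_neg (by tauto)]

/-! ### counting functions -/

def cntP (l j : ℕ) (x y : ℤ) : ℕ :=
  ((Finset.univ : Finset (Fin l → Bool)).filter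
    (fun f => x + pathVal f l = y ∧ IsNonnegFrom x f ∧
      pathVal f l - pathVal f (l - 1) = 1 ∧ numPeaks f = j)).card

def cntD (l j : ℕ) (x y : ℤ) : ℕ :=
  ((Finset.univ : Finset (Fin l → Bool)).filter
    (fun f => x + pathVal f l = y ∧ IsNonnegFrom x f ∧
      pathVal f 1 = -1 ∧ pathVal f l - pathVal f (l - 1) = 1 ∧ numPeaks f = j)).card

lemma pathVal_len_zero (g : Fin 0 → Bool) (i : ℕ) : pathVal g i = 0 := by
  simp [pathVal]

lemma cntP_zero (j : ℕ) (x y : ℤ) : cntP 0 j x y = 0 := by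
  rw [cntP, Finset.card_eq_zero, Finset.filter_eq_empty_iff]
  rintro f - ⟨-, -, h, -⟩
  simp [pathVal_len_zero] at h

lemma cntD_one (j : ℕ) (x y : ℤ) : cntD 1 j x y = 0 := by
  rw [cntD, Finset.card_eq_zero, Finset.filter_eq_empty_iff]
  rintro f - ⟨-, -, h1, h2, -⟩
  rw [show (1:ℕ) - 1 = 0 from rfl, pathVal_zero] at h2
  omega

lemma cntP_neg (l j : ℕ) (x y : ℤ) (hx : x < 0) : cntP l j x y = 0 := by
  rw [cntP, Finset.card_eq_zero, Finset.filter_eq_empty_iff]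
  rintro f - ⟨-, h, -⟩
  have := h 0 (by simp)
  rw [pathVal_zero] at this
  omega

lemma nonneg_len_zero (z : ℤ) (g : Fin 0 → Bool) : IsNonnegFrom z g ↔ 0 ≤ z := by
  unfold IsNonnegFrom
  constructor
  · intro h; have := h 0 (by simp); rwa [pathVal_zero, add_zero] at this
  · intro h i _; rw [pathVal_len_zero]; omega

lemma numPeaks_len_zero (g : Fin 0 → Bool) : numPeaks g = 0 := by
  simp [numPeaks]

lemma cntP_one (j : ℕ) (x y : ℤ) :
    cntP 1 j x y = if 0 ≤ x ∧ y = x + 1 ∧ j = 0 then 1 else 0 := by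
  rw [cntP, card_cons_split]
  have hfalse : (Finset.univ.filter fun g : Fin 0 → Bool =>
      x + pathVal (Fin.cons false g) 1 = y ∧ IsNonnegFrom x (Fin.cons false g) ∧
      pathVal (Fin.cons false g) 1 - pathVal (Fin.cons false g) (1 - 1) = 1 ∧
      numPeaks (Fin.cons false g) = j) = ∅ := by
    rw [Finset.filter_eq_empty_iff]
    rintro g - ⟨-, -, h, -⟩
    rw [pathVal_one_cons, show (1:ℕ) - 1 = 0 from rfl, pathVal_zero] at h
    simp [eps] at h
  rw [hfalse, Finset.card_empty]
  have htrue : ∀ g : Fin 0 → Bool,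
      (x + pathVal (Fin.cons true g) 1 = y ∧ IsNonnegFrom x (Fin.cons true g) ∧
      pathVal (Fin.cons true g) 1 - pathVal (Fin.cons true g) (1 - 1) = 1 ∧
      numPeaks (Fin.cons true g) = j) ↔ (0 ≤ x ∧ y = x + 1 ∧ j = 0) := by
    intro g
    rw [pathVal_one_cons, show (1:ℕ) - 1 = 0 from rfl, pathVal_zero,
      nonneg_cons, nonneg_len_zero, numPeaks_cons, numPeaks_len_zero]
    simp [eps]
    constructor
    · rintro ⟨h1, ⟨h2, -⟩, h3⟩; exact ⟨h2, by omega, h3.symm⟩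
    · rintro ⟨h1, h2, h3⟩; exact ⟨by omega, ⟨h1, by omega⟩, h3.symm⟩
  rw [Finset.filter_congr (fun g _ => htrue g), Finset.filter_const]
  by_cases hc : 0 ≤ x ∧ y = x + 1 ∧ j = 0
  · rw [if_pos hc, if_pos hc, Finset.card_univ]
    simp
  · rw [if_neg hc, if_neg hc, Finset.card_empty]

lemma predP_cons {l : ℕ} (hl : 1 ≤ l) (b : Bool) (x y : ℤ) (j : ℕ) (g : Fin l → Bool) :
    (x + pathVal (Fin.cons b g) (l + 1) = y ∧ IsNonnegFrom x (Fin.cons b g) ∧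
      pathVal (Fin.cons b g) (l + 1) - pathVal (Fin.cons b g) (l + 1 - 1) = 1 ∧
      numPeaks (Fin.cons b g) = j)
    ↔ ((x + eps b) + pathVal g l = y ∧ (0 ≤ x ∧ IsNonnegFrom (x + eps b) g) ∧
      (pathVal g l - pathVal g (l - 1) = 1) ∧
      numPeaks g + (if b = true ∧ pathVal g 1 = -1 then 1 else 0) = j) := by
  have e1 : pathVal (Fin.cons b g) (l + 1) = eps b + pathVal g l := pathVal_cons b g l
  have e2 : pathVal (Fin.cons b g) l = eps b + pathVal g (l - 1) := by
    have := pathVal_cons b g (l - 1)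
    rwa [show l - 1 + 1 = l by omega] at this
  rw [show l + 1 - 1 = l from rfl, e1, e2, nonneg_cons, numPeaks_cons]
  rw [show (if b = true ∧ pathVal g 1 = -1 ∧ 0 < l then 1 else 0)
      = (if b = true ∧ pathVal g 1 = -1 then 1 else 0) by
    by_cases hc : b = true ∧ pathVal g 1 = -1
    · rw [if_pos ⟨hc.1, hc.2, by omega⟩, if_pos hc]
    · rw [if_neg (by tauto), if_neg hc]]
  constructor <;> rintro ⟨h1, h2, h3, h4⟩ <;> exact ⟨by linarith, h2, by linarith, h4⟩

lemma cntD_succ (l j : ℕ) (x y : ℤ) :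
    cntD (l + 1) j x y = cntP l j (x - 1) y := by
  rcases Nat.eq_zero_or_pos l with rfl | hl
  · rw [cntD_one, cntP_zero]
  rw [cntD, cntP, card_cons_split]
  have htrue : (Finset.univ.filter fun g : Fin l → Bool =>
      (x + pathVal (Fin.cons true g) (l + 1) = y ∧ IsNonnegFrom x (Fin.cons true g) ∧
        pathVal (Fin.cons true g) 1 = -1 ∧
        pathVal (Fin.cons true g) (l + 1) - pathVal (Fin.cons true g) (l + 1 - 1) = 1 ∧
        numPeaks (Fin.cons true g) = j)) = ∅ := by
    rw [Finset.filter_eq_empty_iff]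
    rintro g - ⟨-, -, h, -⟩
    rw [pathVal_one_cons] at h
    simp [eps] at h
  rw [htrue, Finset.card_empty, add_zero]
  apply Finset.card_nbij id
  · intro g hg
    simp only [Finset.mem_coe, Finset.mem_filter, Finset.mem_univ, true_and, id] at hg ⊢
    obtain ⟨h1, h2, -, h4, h5⟩ := hg
    have := (predP_cons hl false x y j g).mp ⟨h1, h2, h4, h5⟩
    simp only [eps, if_neg (Bool.false_ne_true), Bool.false_eq_true, false_and, if_false,
      add_zero] at this
    obtain ⟨a1, ⟨-, a2⟩, a3, a4⟩ := this
    exact ⟨by linarith, a2, a3, a4⟩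
  · intro g1 h1 g2 h2 h; exact h
  · intro g hg
    refine ⟨g, ?_, rfl⟩
    simp only [Finset.coe_filter, Set.mem_setOf_eq, Finset.mem_univ, true_and] at hg
    simp only [Finset.mem_coe, Finset.mem_filter, Finset.mem_univ, true_and]
    obtain ⟨a1, a2, a3, a4⟩ := hg
    have h0x : (0:ℤ) ≤ x - 1 := by
      have := a2 0 (by simp)
      rwa [pathVal_zero, add_zero] at this
    have := (predP_cons hl false x y j g).mpr (by
      simp only [eps, Bool.false_eq_true, if_false, false_and, add_zero]
      refine ⟨by linarith, ⟨by linarith, ?_⟩, a3, a4⟩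
      rw [show x + -1 = x - 1 by ring]
      exact a2)
    obtain ⟨b1, b2, b3, b4⟩ := this
    exact ⟨b1, b2, pathVal_one_cons false g, b3, b4⟩

lemma cntP_succ (l j : ℕ) (hl : 1 ≤ l) (x y : ℤ) (hx : 0 ≤ x) :
    cntP (l + 1) j x y + cntD l j (x + 1) y
      = cntP l j (x - 1) y + cntP l j (x + 1) y
        + (if 1 ≤ j then cntD l (j - 1) (x + 1) y else 0) := by
  rw [cntP, card_cons_split]
  -- the `false` branch
  have hfb : ∀ g ∈ (Finset.univ : Finset (Fin l → Bool)),
      ((x + pathVal (Fin.cons false g) (l + 1) = y ∧ IsNonnegFrom x (Fin.cons false g) ∧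
        pathVal (Fin.cons false g) (l + 1) - pathVal (Fin.cons false g) (l + 1 - 1) = 1 ∧
        numPeaks (Fin.cons false g) = j)
      ↔ ((x - 1) + pathVal g l = y ∧ IsNonnegFrom (x - 1) g ∧
        pathVal g l - pathVal g (l - 1) = 1 ∧ numPeaks g = j)) := by
    intro g _
    rw [predP_cons hl false]
    simp only [eps, Bool.false_eq_true, if_false, false_and, add_zero]
    constructor
    · rintro ⟨a1, ⟨-, a2⟩, a3, a4⟩
      rw [show x + -1 = x - 1 by ring] at a1 a2
      exact ⟨a1, a2, a3, a4⟩
    · rintro ⟨a1, a2, a3, a4⟩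
      rw [show x + -1 = x - 1 by ring]
      exact ⟨a1, ⟨by omega, a2⟩, a3, a4⟩
  rw [Finset.filter_congr hfb]
  -- the `true` branch
  have htb : ∀ g ∈ (Finset.univ : Finset (Fin l → Bool)),
      ((x + pathVal (Fin.cons true g) (l + 1) = y ∧ IsNonnegFrom x (Fin.cons true g) ∧
        pathVal (Fin.cons true g) (l + 1) - pathVal (Fin.cons true g) (l + 1 - 1) = 1 ∧
        numPeaks (Fin.cons true g) = j)
      ↔ ((x + 1) + pathVal g l = y ∧ IsNonnegFrom (x + 1) g ∧
        pathVal g l - pathVal g (l - 1) = 1 ∧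
        numPeaks g + (if pathVal g 1 = -1 then 1 else 0) = j)) := by
    intro g _
    rw [predP_cons hl true]
    simp only [eps, if_true, true_and]
    constructor
    · rintro ⟨a1, ⟨-, a2⟩, a3, a4⟩
      exact ⟨a1, a2, a3, a4⟩
    · rintro ⟨a1, a2, a3, a4⟩
      exact ⟨a1, ⟨hx, a2⟩, a3, a4⟩
  rw [Finset.filter_congr htb]
  -- split the `true` branch by the first step of `g`
  set Q : (Fin l → Bool) → Prop := fun g =>
    ((x + 1) + pathVal g l = y ∧ IsNonnegFrom (x + 1) g ∧
      pathVal g l - pathVal g (l - 1) = 1 ∧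
      numPeaks g + (if pathVal g 1 = -1 then 1 else 0) = j) with hQ
  have hsplit : ((Finset.univ.filter fun g : Fin l → Bool => Q g ∧ pathVal g 1 = -1)).card
      + ((Finset.univ.filter fun g : Fin l → Bool => Q g ∧ ¬ (pathVal g 1 = -1))).card
      = (Finset.univ.filter Q).card := by
    have h := Finset.card_filter_add_card_filter_not
      (s := Finset.univ.filter Q) (fun g : Fin l → Bool => pathVal g 1 = -1)
    rw [Finset.filter_filter, Finset.filter_filter] at h
    exact h
  rw [← hsplit]
  have hcF : (Finset.filter (fun g : Fin l → Bool => (x - 1) + pathVal g l = y ∧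
      IsNonnegFrom (x - 1) g ∧ pathVal g l - pathVal g (l - 1) = 1 ∧ numPeaks g = j)
      Finset.univ).card = cntP l j (x - 1) y := rfl
  rw [hcF]
  -- the QD part
  have hQD : ((Finset.univ.filter fun g => Q g ∧ pathVal g 1 = -1)).card
      = if 1 ≤ j then cntD l (j - 1) (x + 1) y else 0 := by
    by_cases hj : 1 ≤ j
    · rw [if_pos hj, cntD]
      apply Finset.card_nbij id
      · intro g hg
        simp only [Finset.mem_coe, Finset.mem_filter, Finset.mem_univ, true_and, id, hQ] at hg ⊢
        obtain ⟨⟨a1, a2, a3, a4⟩, a5⟩ := hg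
        rw [if_pos a5] at a4
        exact ⟨a1, a2, a5, a3, by omega⟩
      · intro g1 h1 g2 h2 h; exact h
      · intro g hg
        refine ⟨g, ?_, rfl⟩
        simp only [Finset.coe_filter, Set.mem_setOf_eq, Finset.mem_univ, true_and] at hg
        simp only [Finset.mem_coe, Finset.mem_filter, Finset.mem_univ, true_and, hQ]
        obtain ⟨a1, a2, a5, a3, a4⟩ := hg
        rw [if_pos a5]
        exact ⟨⟨a1, a2, a3, by omega⟩, a5⟩
    · rw [if_neg hj]
      rw [Finset.card_eq_zero, Finset.filter_eq_empty_iff]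
      rintro g - ⟨⟨-, -, -, a4⟩, a5⟩
      rw [if_pos a5] at a4
      omega
  rw [hQD]
  -- the QnD part :  card (Q ∧ ¬D) + cntD = cntP
  have hQnD : ((Finset.univ.filter fun g => Q g ∧ ¬ (pathVal g 1 = -1))).card
      + cntD l j (x + 1) y = cntP l j (x + 1) y := by
    have e4 : cntP l j (x + 1) y = (Finset.univ.filter fun g : Fin l → Bool =>
        (x + 1 + pathVal g l = y ∧ IsNonnegFrom (x + 1) g ∧
          pathVal g l - pathVal g (l - 1) = 1 ∧ numPeaks g = j)).card := rfl
    have e2 : cntD l j (x + 1) y = (Finset.univ.filter fun g : Fin l → Bool =>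
        ((x + 1 + pathVal g l = y ∧ IsNonnegFrom (x + 1) g ∧
          pathVal g l - pathVal g (l - 1) = 1 ∧ numPeaks g = j) ∧ pathVal g 1 = -1)).card := by
      rw [cntD]
      apply congrArg Finset.card
      apply Finset.filter_congr
      intro g _
      tauto
    have e3 : ((Finset.univ.filter fun g => Q g ∧ ¬ (pathVal g 1 = -1))).card
        = (Finset.univ.filter fun g : Fin l → Bool =>
            ((x + 1 + pathVal g l = y ∧ IsNonnegFrom (x + 1) g ∧
              pathVal g l - pathVal g (l - 1) = 1 ∧ numPeaks g = j) ∧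
              ¬ (pathVal g 1 = -1))).card := by
      apply congrArg Finset.card
      apply Finset.filter_congr
      intro g _
      simp only [hQ]
      constructor
      · rintro ⟨⟨a1, a2, a3, a4⟩, a5⟩
        rw [if_neg a5, add_zero] at a4
        exact ⟨⟨a1, a2, a3, a4⟩, a5⟩
      · rintro ⟨⟨a1, a2, a3, a4⟩, a5⟩
        rw [if_neg a5, add_zero]
        exact ⟨⟨a1, a2, a3, a4⟩, a5⟩
    have h := Finset.card_filter_add_card_filter_not
      (s := Finset.univ.filter (fun g : Fin l → Bool =>
        (x + 1 + pathVal g l = y ∧ IsNonnegFrom (x + 1) g ∧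
          pathVal g l - pathVal g (l - 1) = 1 ∧ numPeaks g = j)))
      (fun g : Fin l → Bool => pathVal g 1 = -1)
    rw [Finset.filter_filter, Finset.filter_filter] at h
    omega
  omega

/-! ### algebra: ichoose -/

lemma ichoose_neg_left {m p : ℤ} (h : m < 0) : ichoose m p = 0 := by
  rw [ichoose, if_neg]; omega

lemma ichoose_neg_right {m p : ℤ} (h : p < 0) : ichoose m p = 0 := by
  rw [ichoose, if_neg]; omega

lemma ichoose_of_lt {m p : ℤ} (h : m < p) : ichoose m p = 0 := by
  by_cases hm : 0 ≤ m
  · rw [ichoose, if_pos ⟨hm, by omega⟩, Nat.choose_eq_zero_of_lt (by omega)]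
    norm_num
  · exact ichoose_neg_left (by omega)

lemma ichoose_zero_right (m : ℤ) : ichoose m 0 = if 0 ≤ m then 1 else 0 := by
  by_cases hm : 0 ≤ m
  · rw [ichoose, if_pos ⟨hm, le_refl 0⟩, if_pos hm]
    simp
  · rw [ichoose, if_neg (by omega), if_neg hm]

lemma ichoose_pascal (m p : ℤ) (h : ¬(m = 0 ∧ p = 0)) :
    ichoose m p = ichoose (m - 1) p + ichoose (m - 1) (p - 1) := by
  rcases lt_or_ge p 0 with hp | hp
  · rw [ichoose_neg_right hp, ichoose_neg_right hp, ichoose_neg_right (by omega)]; ring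
  rcases lt_or_ge m 0 with hm | hm
  · rw [ichoose_neg_left hm, ichoose_neg_left (by omega), ichoose_neg_left (by omega)]; ring
  rcases eq_or_lt_of_le hp with hp0 | hp1
  · -- p = 0, m ≥ 1
    have hm1 : 1 ≤ m := by omega
    rw [← hp0, ichoose_zero_right, ichoose_zero_right, ichoose_neg_right (by omega),
      if_pos hm, if_pos (by omega)]
    ring
  rcases eq_or_lt_of_le hm with hm0 | hm1
  · -- m = 0, p ≥ 1
    rw [← hm0, ichoose_of_lt (by omega), ichoose_neg_left (by omega),
      ichoose_neg_left (by omega)]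
    ring
  -- m ≥ 1, p ≥ 1
  rw [ichoose, ichoose, ichoose, if_pos ⟨by omega, by omega⟩, if_pos ⟨by omega, by omega⟩,
    if_pos ⟨by omega, by omega⟩]
  have em : m.toNat = (m - 1).toNat + 1 := by omega
  have ep : p.toNat = (p - 1).toNat + 1 := by omega
  rw [em, ep, Nat.choose_succ_succ']
  push_cast
  ring

/-- The key Pascal-style identity for products. -/
lemma key_identity (a b p : ℤ) (hp : 0 ≤ p) (h : ¬(a = 1 ∧ b = 0)) :
    ichoose (a - 1) p * ichoose b p
      = ichoose (a - 1) p * ichoose (b - 1) p + ichoose (a - 2) p * ichoose b p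
        - ichoose (a - 2) p * ichoose (b - 1) p
        + ichoose (a - 2) (p - 1) * ichoose (b - 1) (p - 1) := by
  rcases eq_or_lt_of_le hp with hp0 | hp1
  · -- p = 0 : indicator casework
    subst hp0
    rw [ichoose_neg_right (by omega : (0:ℤ) - 1 < 0), ichoose_neg_right
      (by omega : (0:ℤ) - 1 < 0), ichoose_zero_right, ichoose_zero_right,
      ichoose_zero_right, ichoose_zero_right]
    by_cases h1 : 0 ≤ a - 1 <;> by_cases h2 : 0 ≤ a - 2 <;> by_cases h3 : 0 ≤ b <;>
      by_cases h4 : 0 ≤ b - 1 <;>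
      simp only [if_pos, if_neg, h1, h2, h3, h4, ite_true, ite_false] <;> ring_nf <;> omega
  · -- p ≥ 1
    have pb : ichoose b p = ichoose (b - 1) p + ichoose (b - 1) (p - 1) :=
      ichoose_pascal b p (by omega)
    have pa : ichoose (a - 1) p = ichoose (a - 2) p + ichoose (a - 2) (p - 1) := by
      have := ichoose_pascal (a - 1) p (by omega)
      rwa [show a - 1 - 1 = a - 2 by ring] at this
    rw [pb, pa]; ring

/-! ### algebra: Phi -/

def Phi (l x y p : ℤ) : ℤ :=
  hchoose (l + y - x) p * hchoose (l - y + x + 2) p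
    - hchoose (l + y + x + 2) p * hchoose (l - y - x) p

lemma hchoose_odd (n p : ℤ) (h : ¬ 2 ∣ n) : hchoose n p = 0 := by
  rw [hchoose, if_neg h]

lemma hchoose_eq (n k p : ℤ) (h : n = 2 * k + 2) : hchoose n p = ichoose k p := by
  rw [hchoose, if_pos ⟨k + 1, by omega⟩]
  congr 1
  omega

lemma Phi_odd (l x y p : ℤ) (h : ¬ 2 ∣ (l + y - x)) : Phi l x y p = 0 := by
  unfold Phi
  rw [hchoose_odd (l + y - x) p h, hchoose_odd (l + y + x + 2) p (by omega)]
  ring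

lemma Phi_neg_p (l x y p : ℤ) (h : p < 0) : Phi l x y p = 0 := by
  unfold Phi
  have h1 : ∀ n : ℤ, hchoose n p = 0 := by
    intro n
    rw [hchoose]
    split
    · exact ichoose_neg_right h
    · rfl
  simp [h1]

lemma Phi_neg_one (l y p : ℤ) : Phi l (-1) y p = 0 := by
  unfold Phi
  rw [show l + y - -1 = l + y + 1 by ring, show l - y + -1 + 2 = l - y + 1 by ring,
    show l + y + -1 + 2 = l + y + 1 by ring, show l - y - -1 = l - y + 1 by ring]
  ring

lemma Phi_zero_l (x y p : ℤ) : Phi 0 x y p = 0 := by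
  by_cases h : 2 ∣ (0 + y - x)
  · obtain ⟨t, ht⟩ := h
    unfold Phi
    rw [hchoose_eq (0 + y - x) (t - 1) p (by omega),
      hchoose_eq (0 - y + x + 2) (-t) p (by omega),
      hchoose_eq (0 + y + x + 2) (t + x) p (by omega),
      hchoose_eq (0 - y - x) (-t - x - 1) p (by omega)]
    have h1 : ichoose (t - 1) p * ichoose (-t) p = 0 := by
      rcases le_or_gt t 0 with ht' | ht'
      · rw [ichoose_neg_left (by omega : t - 1 < 0)]; ring
      · rw [ichoose_neg_left (by omega : -t < 0)]; ring
    have h2 : ichoose (t + x) p * ichoose (-t - x - 1) p = 0 := by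
      rcases le_or_gt 0 (t + x) with ht' | ht'
      · rw [ichoose_neg_left (by omega : -t - x - 1 < 0)]; ring
      · rw [ichoose_neg_left (by omega : t + x < 0)]; ring
    rw [h1, h2]
    ring
  · exact Phi_odd 0 x y p h

lemma ichoose_zero_zero : ichoose 0 0 = 1 := by
  rw [ichoose, if_pos ⟨le_refl 0, le_refl 0⟩]
  norm_num

lemma Phi_one_l (x y p : ℤ) (hx : 0 ≤ x) (hy : 0 ≤ y) (hp : 0 ≤ p) :
    Phi 1 x y p = if y = x + 1 ∧ p = 0 then 1 else 0 := by
  by_cases h : 2 ∣ (1 + y - x)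
  · obtain ⟨u, hu⟩ := h
    unfold Phi
    rw [hchoose_eq (1 + y - x) (u - 1) p (by omega),
      hchoose_eq (1 - y + x + 2) (1 - u) p (by omega),
      hchoose_eq (1 + y + x + 2) (u + x) p (by omega),
      hchoose_eq (1 - y - x) (-u - x) p (by omega)]
    have h2 : ichoose (u + x) p * ichoose (-u - x) p = 0 := by
      have hux : 1 ≤ u + x := by omega
      rw [ichoose_neg_left (by omega : -u - x < 0)]; ring
    rw [h2]
    rcases lt_trichotomy u 1 with hu' | hu' | hu'
    · rw [ichoose_neg_left (by omega : u - 1 < 0), if_neg (by omega)]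
      ring
    · subst hu'
      norm_num
      rcases eq_or_lt_of_le hp with hp0 | hp1
      · rw [← hp0, ichoose_zero_zero, if_pos (by omega)]
        ring
      · rw [ichoose_of_lt (by omega : (0:ℤ) < p), if_neg (by omega)]
        ring
    · rw [ichoose_of_lt (by omega : (1 - u) < p) ]
      · rw [if_neg (by omega)]; ring
  · rw [Phi_odd 1 x y p h, if_neg (by omega)]

lemma Phi_rec (l x y p : ℤ) (hl : 1 ≤ l) (hp : 0 ≤ p) :
    Phi (l + 1) x y p
      = Phi l (x - 1) y p + Phi l (x + 1) y p - Phi (l - 1) x y p + Phi (l - 1) x y (p - 1) := by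
  by_cases h : 2 ∣ (l + 1 + y - x)
  · obtain ⟨u, hu⟩ := h
    unfold Phi
    rw [hchoose_eq (l + 1 + y - x) (u - 1) p (by omega),
      hchoose_eq (l + 1 - y + x + 2) (l + 1 - u) p (by omega),
      hchoose_eq (l + 1 + y + x + 2) (u + x) p (by omega),
      hchoose_eq (l + 1 - y - x) (l - u - x) p (by omega),
      hchoose_eq (l + y - (x - 1)) (u - 1) p (by omega),
      hchoose_eq (l - y + (x - 1) + 2) (l - u) p (by omega),
      hchoose_eq (l + y + (x - 1) + 2) (u + x - 1) p (by omega),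
      hchoose_eq (l - y - (x - 1)) (l - u - x) p (by omega),
      hchoose_eq (l + y - (x + 1)) (u - 2) p (by omega),
      hchoose_eq (l - y + (x + 1) + 2) (l + 1 - u) p (by omega),
      hchoose_eq (l + y + (x + 1) + 2) (u + x) p (by omega),
      hchoose_eq (l - y - (x + 1)) (l - u - x - 1) p (by omega),
      hchoose_eq (l - 1 + y - x) (u - 2) p (by omega),
      hchoose_eq (l - 1 - y + x + 2) (l - u) p (by omega),
      hchoose_eq (l - 1 + y + x + 2) (u + x - 1) p (by omega),
      hchoose_eq (l - 1 - y - x) (l - u - x - 1) p (by omega),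
      hchoose_eq (l - 1 + y - x) (u - 2) (p - 1) (by omega),
      hchoose_eq (l - 1 - y + x + 2) (l - u) (p - 1) (by omega),
      hchoose_eq (l - 1 + y + x + 2) (u + x - 1) (p - 1) (by omega),
      hchoose_eq (l - 1 - y - x) (l - u - x - 1) (p - 1) (by omega)]
    -- set d for readability
    have k1 := key_identity u (l + 1 - u) p hp (by omega)
    have k2 := key_identity (u + x + 1) (l - u - x) p hp (by omega)
    rw [show u + x + 1 - 1 = u + x by ring, show u + x + 1 - 2 = u + x - 1 by ring,
      show l - u - x - 1 = l - u - x - 1 by ring] at k2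
    rw [show l + 1 - u - 1 = l - u by ring] at k1
    linear_combination k1 - k2
  · rw [Phi_odd (l + 1) x y p h, Phi_odd l (x - 1) y p (by omega),
      Phi_odd l (x + 1) y p (by omega), Phi_odd (l - 1) x y p (by omega),
      Phi_odd (l - 1) x y (p - 1) (by omega)]
    ring

/-! ### main induction -/

lemma cntP_eq_Phi (l : ℕ) : ∀ (j : ℕ) (x y : ℤ), 0 ≤ x → 0 ≤ y →
    (cntP l j x y : ℤ) = Phi l x y j := by
  induction l using Nat.strong_induction_on with
  | _ l IH =>
    match l with
    | 0 =>
      intro j x y hx hy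
      rw [cntP_zero]
      rw [show ((0:ℕ):ℤ) = 0 from rfl, Phi_zero_l]
    | 1 =>
      intro j x y hx hy
      rw [cntP_one, show ((1:ℕ):ℤ) = 1 from rfl, Phi_one_l x y j hx hy (by positivity)]
      by_cases hc : y = x + 1 ∧ j = 0
      · rw [if_pos ⟨hx, hc.1, hc.2⟩, if_pos ⟨hc.1, Nat.cast_eq_zero.mpr hc.2⟩]
        rfl
      · rw [if_neg (by tauto), if_neg (by
          rintro ⟨h1, h2⟩
          exact hc ⟨h1, Nat.cast_eq_zero.mp h2⟩)]
        rfl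
    | (n + 2) =>
      intro j x y hx hy
      have hrec := cntP_succ (n + 1) j (by omega) x y hx
      have hD : ∀ j', cntD (n + 1) j' (x + 1) y = cntP n j' x y := by
        intro j'
        have := cntD_succ n j' (x + 1) y
        rwa [show x + 1 - 1 = x by ring] at this
      have hcast := congrArg (fun t : ℕ => (t : ℤ)) hrec
      simp only [Nat.cast_add, apply_ite (fun t : ℕ => (t : ℤ)), Nat.cast_zero] at hcast
      rw [hD j, hD (j - 1)] at hcast
      have hP1 : (cntP (n + 1) j (x - 1) y : ℤ) = Phi (n + 1) (x - 1) y j := by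
        rcases eq_or_lt_of_le hx with hx0 | hx1
        · rw [cntP_neg _ _ _ _ (by omega), ← hx0]
          rw [show (0:ℤ) - 1 = -1 by ring, Phi_neg_one]
          rfl
        · have := IH (n + 1) (by omega) j (x - 1) y (by omega) hy
          rwa [Nat.cast_add, Nat.cast_one] at this
      have hP2 : (cntP (n + 1) j (x + 1) y : ℤ) = Phi (n + 1) (x + 1) y j := by
        have := IH (n + 1) (by omega) j (x + 1) y (by omega) hy
        rwa [Nat.cast_add, Nat.cast_one] at this
      have hP3 : (cntP n j x y : ℤ) = Phi n x y j := IH n (by omega) j x y hx hy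
      have hP4 : (if 1 ≤ j then (cntP n (j - 1) x y : ℤ) else 0) = Phi n x y ((j : ℤ) - 1) := by
        by_cases hj : 1 ≤ j
        · rw [if_pos hj, IH n (by omega) (j - 1) x y hx hy]
          congr 1
          omega
        · rw [if_neg hj, Phi_neg_p _ _ _ _ (by omega)]
      rw [hP1, hP2, hP3, hP4] at hcast
      have hPhi := Phi_rec ((n : ℤ) + 1) x y (j : ℤ) (by omega) (by positivity)
      rw [show (n : ℤ) + 1 + 1 = ((n : ℕ) + 2 : ℤ) by ring,
        show (n : ℤ) + 1 - 1 = (n : ℤ) by ring] at hPhi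
      have : ((n + 2 : ℕ) : ℤ) = (n : ℤ) + 2 := by push_cast; ring
      rw [this]
      rw [show ((n:ℕ) + 2 : ℤ) = (n : ℤ) + 2 by ring] at hPhi
      linarith [hcast, hPhi]

lemma hchoose_mul_opp (a p q : ℤ) : hchoose a p * hchoose (-a) q = 0 := by
  by_cases h : 2 ∣ a
  · obtain ⟨t, ht⟩ := h
    rw [hchoose_eq a (t - 1) p (by omega), hchoose_eq (-a) (-t - 1) q (by omega)]
    rcases le_or_gt t 0 with ht' | ht'
    · rw [ichoose_neg_left (by omega : t - 1 < 0)]; ring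
    · rw [ichoose_neg_left (by omega : -t - 1 < 0)]; ring
  · rw [hchoose_odd a p h]; ring

lemma final_alg (l j : ℕ) (x y : ℤ) :
    Phi ((l : ℤ) - 1) (x - 1) y j = G l j j x y - G l j j (-x) y := by
  unfold Phi G
  rw [show (l:ℤ) - 1 + y - (x - 1) = (l:ℤ) + y - x by ring,
      show (l:ℤ) - 1 - y + (x - 1) + 2 = (l:ℤ) - y + x by ring,
      show (l:ℤ) - 1 + y + (x - 1) + 2 = (l:ℤ) + y + x by ring,
      show (l:ℤ) - 1 - y - (x - 1) = (l:ℤ) - y - x by ring,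
      show (l:ℤ) + y - -x = (l:ℤ) + y + x by ring,
      show (l:ℤ) - y + -x = (l:ℤ) - y - x by ring]


/-- For `x ≥ 1`, `y ≥ 1`, the number of nonnegative Bernoulli paths of length
`l` from `x` to `y` with exactly `j` peaks, starting with a down step and
ending with an up step, equals `G(l,j,j,x,y) - G(l,j,j,-x,y)`. -/
theorem card_nonneg_paths_du (l j : ℕ) (x y : ℤ) (hx : 1 ≤ x) (hy : 1 ≤ y) :
    (((Finset.univ : Finset (Fin l → Bool)).filter
        (fun f => x + pathVal f l = y ∧ IsNonnegFrom x f ∧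
          pathVal f 1 = -1 ∧ pathVal f l - pathVal f (l - 1) = 1 ∧
          numPeaks f = j)).card : ℤ)
      = G l j j x y - G l j j (-x) y := by
  rcases Nat.eq_zero_or_pos l with rfl | hl
  · have hL : ((Finset.univ : Finset (Fin 0 → Bool)).filter
        (fun f => x + pathVal f 0 = y ∧ IsNonnegFrom x f ∧
          pathVal f 1 = -1 ∧ pathVal f 0 - pathVal f (0 - 1) = 1 ∧
          numPeaks f = j)).card = 0 := by
      rw [Finset.card_eq_zero, Finset.filter_eq_empty_iff]
      rintro f - ⟨-, -, h, -⟩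
      rw [pathVal_len_zero] at h
      omega
    rw [hL]
    have h1 : G ((0:ℕ):ℤ) j j x y = 0 := by
      rw [G, Nat.cast_zero, show (0:ℤ) - y + x = -(0 + y - x) by ring]
      exact hchoose_mul_opp _ _ _
    have h2 : G ((0:ℕ):ℤ) j j (-x) y = 0 := by
      rw [G, Nat.cast_zero, show (0:ℤ) - y + -x = -(0 + y - -x) by ring]
      exact hchoose_mul_opp _ _ _
    rw [h1, h2]
    ring
  · obtain ⟨m, rfl⟩ : ∃ m, l = m + 1 := ⟨l - 1, by omega⟩
    show (cntD (m + 1) j x y : ℤ) = _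
    rw [cntD_succ m j x y, cntP_eq_Phi m j (x - 1) y (by omega) (by omega)]
    have hG := final_alg (m + 1) j x y
    rwa [show ((m + 1 : ℕ) : ℤ) - 1 = (m : ℤ) by push_cast; ring] at hG
end
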